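/- arXiv:math/0702508 — 7 statements merged into one kernel-verified Lean document; each statement's English description precedes it below -/
import Mathlib

section
/- If I ⊆ S is a monomial ideal of strong Borel type, then I is of Borel type; that is, for every index 1 ≤ j ≤ n one has (I : x_j^∞) = (I : (x_1,…,x_j)^∞), where for an ideal T ⊆ S, (I : T^∞) denotes the union over k ≥ 1 of the colon ideals (I : T^k). -/
open MvPolynomial

/-- A monomial ideal of `K[x_1,…,x_n]`: an ideal generated by monomials. -/
def IsMonomialIdeal {n : ℕ} {K : Type*} [Field K]
    (I : Ideal (MvPolynomial (Fin n) K)) : Prop :=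
  ∃ A : Set (Fin n →₀ ℕ),
    I = Ideal.span ((fun m => (monomial m (1 : K) : MvPolynomial (Fin n) K)) '' A)

/-- A monomial ideal `I` is of strong Borel type (SBT) if for every monomial `u ∈ I`
(with exponent vector `m`) and all indices `j < i` there is `0 ≤ t ≤ ν_i(u)` with
`x_j^t · u / x_i^{ν_i(u)} ∈ I`. -/
def IsSBT {n : ℕ} {K : Type*} [Field K]
    (I : Ideal (MvPolynomial (Fin n) K)) : Prop :=
  IsMonomialIdeal I ∧
    ∀ m : Fin n →₀ ℕ, (monomial m (1 : K) : MvPolynomial (Fin n) K) ∈ I →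
      ∀ j i : Fin n, j < i →
        ∃ t : ℕ, t ≤ m i ∧
          (monomial (Finsupp.update m i 0 + Finsupp.single j t) (1 : K) :
            MvPolynomial (Fin n) K) ∈ I

/-- `(I : T^∞) = ⋃_{k ≥ 1} (I : T^k)`. -/
noncomputable def satIdeal {n : ℕ} {K : Type*} [Field K]
    (I T : Ideal (MvPolynomial (Fin n) K)) : Ideal (MvPolynomial (Fin n) K) :=
  ⨆ k ∈ {k : ℕ | 1 ≤ k}, Submodule.colon I (((T ^ k : Ideal (MvPolynomial (Fin n) K))) : Set (MvPolynomial (Fin n) K))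

/-- Membership characterization for monomial ideals. -/
lemma mem_span_monomials_iff {n : ℕ} {K : Type*} [Field K] (A : Set (Fin n →₀ ℕ))
    (p : MvPolynomial (Fin n) K) :
    p ∈ Ideal.span ((fun m => (monomial m (1 : K) : MvPolynomial (Fin n) K)) '' A) ↔
      ∀ m ∈ p.support, ∃ a ∈ A, a ≤ m := by
  classical
  constructor
  · intro hp
    induction hp using Submodule.span_induction with
    | mem x hx =>
        obtain ⟨a, ha, rfl⟩ := hx
        intro m hm
        rw [MvPolynomial.mem_support_iff, MvPolynomial.coeff_monomial] at hm
        split_ifs at hm with h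
        · exact ⟨a, ha, h ▸ le_rfl⟩
        · exact absurd rfl hm
    | zero => intro m hm; simp at hm
    | add x y hx hy ihx ihy =>
        intro m hm
        have h := MvPolynomial.support_add hm
        rcases Finset.mem_union.mp h with h' | h'
        · exact ihx m h'
        · exact ihy m h'
    | smul a x hx ih =>
        intro m hm
        rw [smul_eq_mul] at hm
        have h := MvPolynomial.support_mul a x hm
        rcases Finset.mem_add.mp h with ⟨b, hb, c, hc, rfl⟩
        obtain ⟨a', ha', hle⟩ := ih c hc
        exact ⟨a', ha', hle.trans le_add_self⟩
  · intro h
    rw [MvPolynomial.as_sum p]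
    apply Ideal.sum_mem
    intro m hm
    obtain ⟨a, ha, hle⟩ := h m hm
    have heq : (monomial m (coeff m p) : MvPolynomial (Fin n) K)
        = monomial (m - a) (coeff m p) * monomial a 1 := by
      rw [monomial_mul, mul_one, tsub_add_cancel_of_le hle]
    rw [heq]
    exact Ideal.mul_mem_left _ _ (Ideal.subset_span ⟨a, ha, rfl⟩)

lemma mem_satIdeal {n : ℕ} {K : Type*} [Field K]
    (I T : Ideal (MvPolynomial (Fin n) K)) (f : MvPolynomial (Fin n) K) :
    f ∈ satIdeal I T ↔ ∃ k, 1 ≤ k ∧ f ∈ Submodule.colon I (((T ^ k : Ideal (MvPolynomial (Fin n) K))) : Set (MvPolynomial (Fin n) K)) := by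
  haveI : Nonempty {k : ℕ // 1 ≤ k} := ⟨⟨1, le_rfl⟩⟩
  have hdir : Directed (· ≤ ·)
      (fun k : {k : ℕ // 1 ≤ k} => Submodule.colon I (((T ^ (k : ℕ) : Ideal (MvPolynomial (Fin n) K))) : Set (MvPolynomial (Fin n) K))) := by
    rintro ⟨a, ha⟩ ⟨b, hb⟩
    refine ⟨⟨max a b, ha.trans (le_max_left _ _)⟩, ?_, ?_⟩
    · exact Submodule.colon_mono le_rfl (SetLike.coe_subset_coe.mpr (Ideal.pow_le_pow_right (le_max_left _ _)))
    · exact Submodule.colon_mono le_rfl (SetLike.coe_subset_coe.mpr (Ideal.pow_le_pow_right (le_max_right _ _)))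
  unfold satIdeal
  rw [iSup_subtype']
  constructor
  · intro h
    obtain ⟨⟨k, hk⟩, h⟩ := (Submodule.mem_iSup_of_directed _ hdir).mp h
    exact ⟨k, hk, h⟩
  · rintro ⟨k, hk, h⟩
    exact (Submodule.mem_iSup_of_directed _ hdir).mpr ⟨⟨k, hk⟩, h⟩

/-- Powers of the ideal generated by variables `X i`, `i ≤ j`, lie in the span of
high-degree monomials in those variables. -/
lemma powT_le {n : ℕ} {K : Type*} [Field K] (j : Fin n) (M : ℕ) :
    (Ideal.span {g : MvPolynomial (Fin n) K | ∃ i : Fin n, i ≤ j ∧ g = X i}) ^ M ≤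
      Ideal.span ((fun e => (monomial e (1 : K) : MvPolynomial (Fin n) K)) ''
        {e : Fin n →₀ ℕ | (∀ i, e i ≠ 0 → i ≤ j) ∧ M ≤ ∑ i, e i}) := by
  induction M with
  | zero =>
      have h1 : (1 : MvPolynomial (Fin n) K) ∈
          Ideal.span ((fun e => (monomial e (1 : K) : MvPolynomial (Fin n) K)) ''
            {e : Fin n →₀ ℕ | (∀ i, e i ≠ 0 → i ≤ j) ∧ 0 ≤ ∑ i, e i}) := by
        refine Ideal.subset_span ⟨0, ⟨fun i hi => absurd rfl hi, Nat.zero_le _⟩, ?_⟩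
        simp
      rw [pow_zero, Ideal.one_eq_top, ← Ideal.eq_top_iff_one] at *
      rw [h1]
  | succ M ih =>
      rw [pow_succ]
      refine le_trans (Ideal.mul_mono_left ih) ?_
      rw [Ideal.span_mul_span']
      rw [Ideal.span_le]
      rintro x hx
      rcases Set.mem_mul.mp hx with ⟨u, hu, v, hv, rfl⟩
      rcases hu with ⟨e, ⟨hesupp, hesum⟩, rfl⟩
      rcases hv with ⟨i, hij, rfl⟩
      have heq : (monomial e (1 : K) : MvPolynomial (Fin n) K) * X i
          = monomial (e + Finsupp.single i 1) 1 := by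
        rw [X, monomial_mul, mul_one]
      rw [heq]
      refine Ideal.subset_span ⟨e + Finsupp.single i 1, ⟨?_, ?_⟩, rfl⟩
      · intro i' hi'
        rw [Finsupp.add_apply] at hi'
        rcases Nat.eq_zero_or_pos (e i') with h0 | hpos
        · have : Finsupp.single i 1 i' ≠ 0 := by
            intro hz; rw [h0, hz] at hi'; exact hi' rfl
          rw [Finsupp.single_apply_ne_zero] at this
          exact this.1 ▸ hij
        · exact hesupp i' (by omega)
      · simp only [Finsupp.add_apply, Finset.sum_add_distrib]
        have h1 : (∑ i' : Fin n, (Finsupp.single i 1 : Fin n →₀ ℕ) i') = 1 := by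
          simp [Finsupp.single_apply]
        rw [h1]
        omega

/-- If `I` is a monomial ideal of strong Borel type then `I` is of Borel type, i.e.
`(I : x_j^∞) = (I : (x_1,…,x_j)^∞)` for every `j`. -/
theorem sbt_is_borel_type {n : ℕ} (hn : 2 ≤ n) {K : Type*} [Field K]
    (I : Ideal (MvPolynomial (Fin n) K)) (hI : IsSBT I) (j : Fin n) :
    satIdeal I (Ideal.span {(X j : MvPolynomial (Fin n) K)}) =
      satIdeal I (Ideal.span {g : MvPolynomial (Fin n) K | ∃ i : Fin n, i ≤ j ∧ g = X i}) := by
  classical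
  obtain ⟨⟨A, hA⟩, hSBT⟩ := hI
  have char : ∀ p : MvPolynomial (Fin n) K, p ∈ I ↔ ∀ m ∈ p.support, ∃ a ∈ A, a ≤ m := by
    intro p; rw [hA]; exact mem_span_monomials_iff A p
  have memI_mono : ∀ {m m' : Fin n →₀ ℕ}, m ≤ m' →
      (∃ a ∈ A, a ≤ m) → (∃ a ∈ A, a ≤ m') := by
    rintro m m' h ⟨a, ha, hle⟩; exact ⟨a, ha, hle.trans h⟩
  have monoMem : ∀ m : Fin n →₀ ℕ,
      (monomial m (1 : K) : MvPolynomial (Fin n) K) ∈ I ↔ ∃ a ∈ A, a ≤ m := by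
    intro m
    rw [char]
    constructor
    · intro h
      apply h m
      rw [support_monomial, if_neg one_ne_zero]
      exact Finset.mem_singleton_self m
    · intro h m' hm'
      rw [support_monomial, if_neg one_ne_zero, Finset.mem_singleton] at hm'
      exact hm' ▸ h
  refine le_antisymm ?_ ?_
  · -- hard direction
    intro f hf
    rw [mem_satIdeal] at hf ⊢
    obtain ⟨k, hk, hf⟩ := hf
    rw [Ideal.span_singleton_pow] at hf
    have hfX : f * (X j : MvPolynomial (Fin n) K) ^ k ∈ I :=
      Ideal.mem_colon_span_singleton.mp hf
    -- step 1
    have step1 : ∀ m ∈ f.support,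
        (monomial (m + Finsupp.single j k) (1 : K) : MvPolynomial (Fin n) K) ∈ I := by
      intro m hm
      rw [monoMem]
      refine (char _).mp hfX _ ?_
      rw [mem_support_iff, X_pow_eq_monomial, coeff_mul_monomial, mul_one]
      exact mem_support_iff.mp hm
    -- step 2
    have step2 : ∀ (m : Fin n →₀ ℕ) (i : Fin n), ∃ t : ℕ,
        m ∈ f.support → i ≤ j → ∃ a ∈ A, a ≤ m + Finsupp.single i t := by
      intro m i
      by_cases hm : m ∈ f.support
      · by_cases hij : i ≤ j
        · rcases lt_or_eq_of_le hij with hlt | heq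
          · obtain ⟨t, ht, htI⟩ := hSBT (m + Finsupp.single j k) (step1 m hm) i j hlt
            refine ⟨t, fun _ _ => ?_⟩
            have h2 : ∃ a ∈ A, a ≤
                Finsupp.update (m + Finsupp.single j k) j 0 + Finsupp.single i t :=
              (monoMem _).mp htI
            refine memI_mono ?_ h2
            rw [Finsupp.le_def]
            intro x
            simp only [Finsupp.add_apply, Finsupp.coe_update]
            by_cases hx : x = j
            · rw [hx, Function.update_self]
              have hij' : (Finsupp.single i t) j = 0 :=
                Finsupp.single_eq_of_ne (ne_of_lt hlt).symm
              simp [hij']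
            · rw [Function.update_of_ne hx]
              have hjx : (Finsupp.single j k) x = 0 :=
                Finsupp.single_eq_of_ne (fun h => hx h)
              simp [hjx]
          · exact ⟨k, fun _ _ => heq ▸ (monoMem _).mp (step1 m hm)⟩
        · exact ⟨0, fun _ h => absurd h hij⟩
      · exact ⟨0, fun h => absurd h hm⟩
    choose t ht using step2
    set N := f.support.sup (fun m => Finset.univ.sup (t m)) with hN
    have htN : ∀ m ∈ f.support, ∀ i : Fin n, t m i ≤ N := by
      intro m hm i
      refine le_trans (Finset.le_sup (Finset.mem_univ i)) ?_
      exact Finset.le_sup (f := fun m => Finset.univ.sup (t m)) hm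
    refine ⟨n * N + 1, Nat.le_add_left 1 _, ?_⟩
    rw [Submodule.mem_colon]
    intro p hp
    rw [smul_eq_mul]
    have hpD := powT_le j (n * N + 1) hp
    -- span D ≤ colon
    have key : Ideal.span ((fun e => (monomial e (1 : K) : MvPolynomial (Fin n) K)) ''
          {e : Fin n →₀ ℕ | (∀ i, e i ≠ 0 → i ≤ j) ∧ n * N + 1 ≤ ∑ i, e i})
        ≤ Submodule.colon I (Ideal.span {f}) := by
      rw [Ideal.span_le]
      rintro x ⟨e, ⟨hesupp, hesum⟩, rfl⟩
      rw [SetLike.mem_coe, Ideal.mem_colon_span_singleton]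
      rw [char]
      intro m' hm'
      have hsub := MvPolynomial.support_mul (monomial e (1 : K)) f hm'
      rcases Finset.mem_add.mp hsub with ⟨b, hb, m, hmf, rfl⟩
      rw [support_monomial, if_neg one_ne_zero, Finset.mem_singleton] at hb
      rw [hb]
      -- pigeonhole: ∃ i, N < e i
      have hex : ∃ i : Fin n, N < e i := by
        by_contra hcon
        push_neg at hcon
        have : ∑ i, e i ≤ n * N := by
          calc ∑ i, e i ≤ ∑ _i : Fin n, N := Finset.sum_le_sum (fun i _ => hcon i)
          _ = n * N := by simp [Finset.sum_const, mul_comm]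
        omega
      obtain ⟨i, hi⟩ := hex
      have hij : i ≤ j := hesupp i (by omega)
      have h1 := ht m i hmf hij
      refine memI_mono ?_ h1
      have : Finsupp.single i (t m i) ≤ e := by
        rw [Finsupp.single_le_iff]
        exact le_trans (htN m hmf i) (le_of_lt hi)
      calc m + Finsupp.single i (t m i) ≤ m + e := add_le_add_right this m
      _ = e + m := add_comm m e
    have := key hpD
    rw [Ideal.mem_colon_span_singleton] at this
    rwa [mul_comm]
  · -- easy direction
    unfold satIdeal
    refine iSup₂_mono fun k _ => ?_
    refine Submodule.colon_mono le_rfl (SetLike.coe_subset_coe.mpr (Ideal.pow_right_mono (Ideal.span_mono ?_) k))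
    intro x hx
    rcases hx with rfl
    exact ⟨j, le_rfl, rfl⟩
end

section
/- If I and J are monomial ideals of strong Borel type in S, then the product I · J is again a monomial ideal of strong Borel type. -/
open MvPolynomial Pointwise

lemma mono_mem_span {n : ℕ} {K : Type*} [Field K] {A : Set (Fin n →₀ ℕ)} {m : Fin n →₀ ℕ} :
    (monomial m (1 : K) : MvPolynomial (Fin n) K) ∈
      Ideal.span ((fun s => (monomial s (1 : K) : MvPolynomial (Fin n) K)) '' A)
      ↔ ∃ a ∈ A, a ≤ m := by
  rw [mem_ideal_span_monomial_image]
  simp [support_monomial]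

/-- The product of two monomial ideals of strong Borel type is of strong Borel type. -/
theorem sbt_mul {n : ℕ} (hn : 2 ≤ n) {K : Type*} [Field K]
    (I J : Ideal (MvPolynomial (Fin n) K)) (hI : IsSBT I) (hJ : IsSBT J) :
    IsSBT (I * J) := by
  obtain ⟨⟨A, hA⟩, hIb⟩ := hI
  obtain ⟨⟨B, hB⟩, hJb⟩ := hJ
  have hIJ : I * J =
      Ideal.span ((fun m => (monomial m (1 : K) : MvPolynomial (Fin n) K)) '' (A + B)) := by
    rw [hA, hB, Ideal.span_mul_span]
    congr 1
    ext p
    simp only [Set.mem_iUnion, Set.mem_image, Set.mem_singleton_iff, exists_prop]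
    constructor
    · rintro ⟨q, ⟨a, ha, rfl⟩, r, ⟨b, hb, rfl⟩, rfl⟩
      exact ⟨a + b, Set.mem_add.mpr ⟨a, ha, b, hb, rfl⟩, by simp [monomial_mul]⟩
    · rintro ⟨c, hc, rfl⟩
      obtain ⟨a, ha, b, hb, rfl⟩ := Set.mem_add.mp hc
      exact ⟨_, ⟨a, ha, rfl⟩, _, ⟨b, hb, rfl⟩, by simp [monomial_mul]⟩
  refine ⟨⟨A + B, hIJ⟩, ?_⟩
  intro m hm j i hji
  rw [hIJ, mono_mem_span] at hm
  obtain ⟨c, hc, hcm⟩ := hm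
  obtain ⟨u, hu, v, hv, rfl⟩ := hc
  have hle : ∀ x, u x + v x ≤ m x := fun x => by
    have := hcm x
    simpa using this
  set a' : Fin n →₀ ℕ := u + (m - (u + v)) with ha'
  have hax : ∀ x, a' x = u x + (m x - (u x + v x)) := fun x => by
    simp [ha', Finsupp.tsub_apply]
  have hsum : ∀ x, a' x + v x = m x := fun x => by
    have := hle x
    rw [hax x]; omega
  have ha'I : (monomial a' (1 : K) : MvPolynomial (Fin n) K) ∈ I := by
    rw [hA, mono_mem_span]
    exact ⟨u, hu, fun x => by rw [hax x]; omega⟩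
  have hb'J : (monomial v (1 : K) : MvPolynomial (Fin n) K) ∈ J := by
    rw [hB, mono_mem_span]
    exact ⟨v, hv, le_refl v⟩
  obtain ⟨t₁, ht₁, hT₁⟩ := hIb a' ha'I j i hji
  obtain ⟨t₂, ht₂, hT₂⟩ := hJb v hb'J j i hji
  refine ⟨t₁ + t₂, ?_, ?_⟩
  · have := hsum i
    omega
  · have key : Finsupp.update m i 0 + Finsupp.single j (t₁ + t₂) =
        (Finsupp.update a' i 0 + Finsupp.single j t₁) +
        (Finsupp.update v i 0 + Finsupp.single j t₂) := by
      ext x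
      have := hsum x
      by_cases hx : x = i
      · subst hx
        simp [Finsupp.add_apply, Finsupp.single_apply, Function.update_apply,
          Finsupp.coe_update]
      · simp only [Finsupp.add_apply, Finsupp.coe_update, Function.update_apply,
          Finsupp.single_apply, if_neg hx]
        split_ifs <;> omega
    rw [key, ← one_mul (1 : K), ← monomial_mul]
    exact Ideal.mul_mem_mul hT₁ hT₂
end

section
/- If I and J are monomial ideals of strong Borel type in S, then the intersection I ∩ J is again a monomial ideal of strong Borel type. -/
open MvPolynomial

lemma monomial_mem_of_le {n : ℕ} {K : Type*} [Field K]
    {I : Ideal (MvPolynomial (Fin n) K)} {A : Set (Fin n →₀ ℕ)}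
    (hIA : I = Ideal.span ((fun m => (monomial m (1 : K) : MvPolynomial (Fin n) K)) '' A))
    {a c : Fin n →₀ ℕ} (ha : a ∈ A) (hac : a ≤ c) :
    (monomial c (1 : K) : MvPolynomial (Fin n) K) ∈ I := by
  classical
  rw [hIA, mem_ideal_span_monomial_image]
  intro xi hxi
  rw [support_monomial, if_neg one_ne_zero, Finset.mem_singleton] at hxi
  exact ⟨a, ha, hxi ▸ hac⟩

/-- The intersection of two monomial ideals of strong Borel type is of strong Borel type. -/
theorem sbt_inf {n : ℕ} (hn : 2 ≤ n) {K : Type*} [Field K]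
    (I J : Ideal (MvPolynomial (Fin n) K)) (hI : IsSBT I) (hJ : IsSBT J) :
    IsSBT (I ⊓ J) := by
  obtain ⟨⟨A, hA⟩, hIb⟩ := hI
  obtain ⟨⟨B, hB⟩, hJb⟩ := hJ
  constructor
  · refine ⟨{m | (monomial m (1 : K) : MvPolynomial (Fin n) K) ∈ I ⊓ J}, le_antisymm ?_ ?_⟩
    · intro p hp
      rw [mem_ideal_span_monomial_image]
      intro xi hxi
      obtain ⟨hpI, hpJ⟩ := Submodule.mem_inf.mp hp
      rw [hA, mem_ideal_span_monomial_image] at hpI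
      rw [hB, mem_ideal_span_monomial_image] at hpJ
      obtain ⟨a, haA, ha⟩ := hpI xi hxi
      obtain ⟨b, hbB, hb⟩ := hpJ xi hxi
      refine ⟨a ⊔ b, ⟨?_, ?_⟩, sup_le ha hb⟩
      · exact monomial_mem_of_le hA haA le_sup_left
      · exact monomial_mem_of_le hB hbB le_sup_right
    · rw [Ideal.span_le]
      rintro _ ⟨m, hm, rfl⟩
      exact hm
  · intro m hm j i hji
    obtain ⟨tI, htI, hmI⟩ := hIb m hm.1 j i hji
    obtain ⟨tJ, htJ, hmJ⟩ := hJb m hm.2 j i hji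
    refine ⟨max tI tJ, max_le htI htJ, ?_, ?_⟩
    · have : Finsupp.update m i 0 + Finsupp.single j (max tI tJ)
          = (Finsupp.update m i 0 + Finsupp.single j tI) + Finsupp.single j (max tI tJ - tI) := by
        rw [add_assoc, ← Finsupp.single_add, Nat.add_sub_cancel' (le_max_left _ _)]
      rw [this, ← one_mul (1 : K), ← monomial_mul]
      exact I.mul_mem_right _ hmI
    · have : Finsupp.update m i 0 + Finsupp.single j (max tI tJ)
          = (Finsupp.update m i 0 + Finsupp.single j tJ) + Finsupp.single j (max tI tJ - tJ) := by
        rw [add_assoc, ← Finsupp.single_add, Nat.add_sub_cancel' (le_max_right _ _)]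
      rw [this, ← one_mul (1 : K), ← monomial_mul]
      exact J.mul_mem_right _ hmJ
end

section
/- Let 1 ≤ i_1 < i_2 < ⋯ < i_r ≤ n be integers, α_1,…,α_r positive integers, and u = x_{i_1}^{α_1} x_{i_2}^{α_2} ⋯ x_{i_r}^{α_r} ∈ S. Then the ideal P = ∏_{q=1}^{r} m_q^{[α_q]} is a monomial ideal of strong Borel type containing u, and P is contained in every monomial ideal of strong Borel type that contains u; that is, P is the smallest strong Borel type ideal containing u (P = SBT(u)). -/
open MvPolynomial

section Aux

variable {n : ℕ} {K : Type*} [Field K]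

lemma fsum_apply (s : Finset ℕ) (f : ℕ → (Fin n →₀ ℕ)) (k : Fin n) :
    (∑ q ∈ s, f q) k = ∑ q ∈ s, f q k :=
  map_sum (Finsupp.applyAddHom k) f s

lemma fupdate_apply (m : Fin n →₀ ℕ) (a k : Fin n) :
    (Finsupp.update m a 0) k = if k = a then 0 else m k := by
  classical
  rw [Finsupp.coe_update, Function.update_apply]

lemma mono_mem_mono {J : Ideal (MvPolynomial (Fin n) K)} {a b : Fin n →₀ ℕ}
    (ha : monomial a (1 : K) ∈ J) (hab : a ≤ b) : monomial b (1 : K) ∈ J := by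
  have h : (monomial b (1 : K) : MvPolynomial (Fin n) K)
      = monomial (b - a) 1 * monomial a 1 := by
    rw [monomial_mul, one_mul, tsub_add_cancel_of_le hab]
  rw [h]
  exact Ideal.mul_mem_left _ _ ha

lemma mono_mem_span_iff {s : Set (Fin n →₀ ℕ)} {m : Fin n →₀ ℕ} :
    (monomial m (1 : K) : MvPolynomial (Fin n) K) ∈
      Ideal.span ((fun b => (monomial b (1 : K) : MvPolynomial (Fin n) K)) '' s) ↔
      ∃ b ∈ s, b ≤ m := by
  rw [mem_ideal_span_monomial_image]
  simp [support_monomial, (one_ne_zero : (1:K) ≠ 0)]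

lemma prod_monomial_one (s : Finset ℕ) (f : ℕ → (Fin n →₀ ℕ)) :
    (∏ q ∈ s, (monomial (f q) (1 : K) : MvPolynomial (Fin n) K))
      = monomial (∑ q ∈ s, f q) 1 := by
  classical
  induction s using Finset.induction_on with
  | empty => simp
  | insert _ _ h ih =>
    rw [Finset.prod_insert h, Finset.sum_insert h, ih, monomial_mul, one_mul]

lemma prod_span_monomial (s : Finset ℕ) (S : ℕ → Set (Fin n →₀ ℕ)) :
    (∏ q ∈ s, Ideal.span ((fun b => (monomial b (1 : K) : MvPolynomial (Fin n) K)) '' S q))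
      = Ideal.span ((fun b => (monomial b (1 : K) : MvPolynomial (Fin n) K)) ''
          {b | ∃ f : ℕ → (Fin n →₀ ℕ), (∀ q ∈ s, f q ∈ S q) ∧ b = ∑ q ∈ s, f q}) := by
  classical
  induction s using Finset.induction_on with
  | empty =>
    simp only [Finset.prod_empty, Finset.notMem_empty, false_implies, implies_true,
      true_and, Finset.sum_empty]
    have : {b : Fin n →₀ ℕ | ∃ _f : ℕ → (Fin n →₀ ℕ), b = 0} = {0} := by
      ext b; simp [eq_comm]
    rw [this, Set.image_singleton, Ideal.one_eq_top, monomial_zero', C_1,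
      Ideal.span_singleton_one]
  | @insert a s ha ih =>
    rw [Finset.prod_insert ha, ih, Ideal.span_mul_span']
    congr 1
    ext x
    constructor
    · rintro ⟨y, ⟨by_, hby, rfl⟩, z, ⟨bz, ⟨f, hf, rfl⟩, rfl⟩, rfl⟩
      refine ⟨by_ + ∑ q ∈ s, f q, ⟨Function.update f a by_, ?_, ?_⟩, ?_⟩
      · intro q hq
        rcases Finset.mem_insert.mp hq with rfl | hq'
        · simpa using hby
        · rw [Function.update_of_ne (by rintro rfl; exact ha hq')]
          exact hf q hq'
      · rw [Finset.sum_insert ha, Function.update_self]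
        congr 1
        exact Finset.sum_congr rfl fun q hq =>
          (Function.update_of_ne (by rintro rfl; exact ha hq) _ _).symm
      · simp [monomial_mul]
    · rintro ⟨b, ⟨f, hf, rfl⟩, rfl⟩
      rw [Finset.sum_insert ha]
      exact ⟨monomial (f a) 1, ⟨f a, hf a (Finset.mem_insert_self a s), rfl⟩,
        monomial (∑ q ∈ s, f q) 1,
        ⟨∑ q ∈ s, f q, ⟨f, fun q hq => hf q (Finset.mem_insert_of_mem hq), rfl⟩, rfl⟩,
        by simp [monomial_mul]⟩

lemma sbt_step {J : Ideal (MvPolynomial (Fin n) K)} (hJ : IsSBT J)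
    {m : Fin n →₀ ℕ} (hm : (monomial m (1 : K) : MvPolynomial (Fin n) K) ∈ J)
    {j iF : Fin n} (hji : j < iF) :
    (monomial (Finsupp.update m iF 0 + Finsupp.single j (m iF)) (1 : K) :
      MvPolynomial (Fin n) K) ∈ J := by
  obtain ⟨t, ht, hmem⟩ := hJ.2 m hm j iF hji
  exact mono_mem_mono hmem
    (add_le_add_right (Finsupp.single_le_single.mpr ht) _)

end Aux

/-- Lemma 1.4: for `u = x_{i_1}^{α_1} ⋯ x_{i_r}^{α_r}` (indices `1 ≤ i_1 < ⋯ < i_r ≤ n`,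
1-based; the variable `x_j` is `X l` with `l + 1 = j`), the ideal
`P = ∏_{q=1}^r (x_1^{α_q},…,x_{i_q}^{α_q})` is a strong Borel type ideal containing `u`,
and it is contained in every strong Borel type ideal containing `u`; i.e. `P = SBT(u)`. -/
theorem principal_sbt_ideal {n : ℕ} (hn : 2 ≤ n) {K : Type*} [Field K]
    (r : ℕ) (hr : 1 ≤ r) (i α : ℕ → ℕ)
    (hi1 : 1 ≤ i 1) (hin : i r ≤ n) (himono : StrictMonoOn i (Set.Icc 1 r))
    (hα : ∀ q ∈ Finset.Icc 1 r, 1 ≤ α q) :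
    letI u : MvPolynomial (Fin n) K :=
      ∏ q ∈ Finset.Icc 1 r, ∏ l : Fin n, if (l : ℕ) + 1 = i q then X l ^ α q else 1
    letI P : Ideal (MvPolynomial (Fin n) K) :=
      ∏ q ∈ Finset.Icc 1 r,
        Ideal.span {g : MvPolynomial (Fin n) K |
          ∃ l : Fin n, (l : ℕ) < i q ∧ g = X l ^ α q}
    IsSBT P ∧ u ∈ P ∧
      ∀ J : Ideal (MvPolynomial (Fin n) K), IsSBT J → u ∈ J → P ≤ J := by
  classical
  -- the range facts
  have hrange : ∀ q ∈ Finset.Icc 1 r, 1 ≤ i q ∧ i q ≤ n := by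
    intro q hq
    rw [Finset.mem_Icc] at hq
    refine ⟨le_trans hi1 ?_, le_trans ?_ hin⟩
    · exact himono.monotoneOn ⟨le_refl 1, hr⟩ ⟨hq.1, hq.2⟩ hq.1
    · exact himono.monotoneOn ⟨hq.1, hq.2⟩ ⟨hr, le_refl r⟩ hq.2
  have hn0 : 0 < n := by omega
  -- the Fin-valued index function `a q = i q - 1`
  set a : ℕ → Fin n := fun q =>
    if h : 1 ≤ i q ∧ i q ≤ n then ⟨i q - 1, by omega⟩ else ⟨0, hn0⟩ with ha_def
  have ha : ∀ q ∈ Finset.Icc 1 r, ((a q : ℕ) + 1 = i q) := by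
    intro q hq
    have h := hrange q hq
    simp only [ha_def, dif_pos h]
    omega
  -- the generating monomial exponents
  set S : ℕ → Set (Fin n →₀ ℕ) := fun q =>
    {b | ∃ l : Fin n, (l : ℕ) < i q ∧ b = Finsupp.single l (α q)} with hS_def
  set B : Set (Fin n →₀ ℕ) :=
    {b | ∃ f : ℕ → (Fin n →₀ ℕ), (∀ q ∈ Finset.Icc 1 r, f q ∈ S q) ∧
      b = ∑ q ∈ Finset.Icc 1 r, f q} with hB_def
  -- P equals the span of the monomials with exponents in B
  have hsets : ∀ q : ℕ, {g : MvPolynomial (Fin n) K |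
      ∃ l : Fin n, (l : ℕ) < i q ∧ g = X l ^ α q}
        = (fun b => (monomial b (1 : K) : MvPolynomial (Fin n) K)) '' S q := by
    intro q
    ext g
    constructor
    · rintro ⟨l, hl, rfl⟩
      exact ⟨Finsupp.single l (α q), ⟨l, hl, rfl⟩, (X_pow_eq_monomial).symm⟩
    · rintro ⟨b, ⟨l, hl, rfl⟩, rfl⟩
      exact ⟨l, hl, X_pow_eq_monomial.symm⟩
  have hP : (∏ q ∈ Finset.Icc 1 r,
      Ideal.span {g : MvPolynomial (Fin n) K |
        ∃ l : Fin n, (l : ℕ) < i q ∧ g = X l ^ α q})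
      = Ideal.span ((fun b => (monomial b (1 : K) : MvPolynomial (Fin n) K)) '' B) := by
    simp only [hsets]
    exact prod_span_monomial _ S
  -- membership in B, in terms of an index function
  have hBmem : ∀ b ∈ B, ∃ l : ℕ → Fin n, (∀ q ∈ Finset.Icc 1 r, (l q : ℕ) < i q) ∧
      b = ∑ q ∈ Finset.Icc 1 r, Finsupp.single (l q) (α q) := by
    rintro b ⟨f, hf, rfl⟩
    choose l hl hfl using hf
    refine ⟨fun q => if h : q ∈ Finset.Icc 1 r then l q h else ⟨0, hn0⟩, ?_, ?_⟩
    · intro q hq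
      simp only [dif_pos hq]
      exact hl q hq
    · refine Finset.sum_congr rfl fun q hq => ?_
      rw [hfl q hq]
      congr 1
      exact (dif_pos hq).symm
  have hBmem' : ∀ l : ℕ → Fin n, (∀ q ∈ Finset.Icc 1 r, (l q : ℕ) < i q) →
      (∑ q ∈ Finset.Icc 1 r, Finsupp.single (l q) (α q)) ∈ B := by
    intro l hl
    exact ⟨fun q => Finsupp.single (l q) (α q), fun q hq => ⟨l q, hl q hq, rfl⟩, rfl⟩
  -- u as a single monomial
  have hu : (∏ q ∈ Finset.Icc 1 r, ∏ l : Fin n,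
        if (l : ℕ) + 1 = i q then (X l : MvPolynomial (Fin n) K) ^ α q else 1)
      = monomial (∑ q ∈ Finset.Icc 1 r, Finsupp.single (a q) (α q)) 1 := by
    rw [← prod_monomial_one]
    refine Finset.prod_congr rfl fun q hq => ?_
    have haq := ha q hq
    rw [← X_pow_eq_monomial]
    refine Finset.prod_eq_single_of_mem (a q) (Finset.mem_univ _) ?_ |>.trans ?_
    · intro l _ hl
      rw [if_neg]
      intro hcon
      exact hl (Fin.ext (by omega))
    · rw [if_pos haq]
  refine ⟨⟨⟨B, hP⟩, ?_⟩, ?_, ?_⟩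
  · -- SBT property of P
    intro m hm j iF hji
    rw [hP] at hm
    obtain ⟨b, hbB, hbm⟩ := mono_mem_span_iff.mp hm
    obtain ⟨l, hl, rfl⟩ := hBmem b hbB
    have hbm' := Finsupp.le_def.mp hbm
    have hjiF : j ≠ iF := ne_of_lt hji
    set t : ℕ := (∑ q ∈ Finset.Icc 1 r, Finsupp.single (l q) (α q)) iF with ht_def
    set l' : ℕ → Fin n := fun q => if l q = iF then j else l q with hl'_def
    have hl' : ∀ q ∈ Finset.Icc 1 r, (l' q : ℕ) < i q := by
      intro q hq
      by_cases h : l q = iF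
      · simp only [hl'_def, if_pos h]
        have : (j : ℕ) < (iF : ℕ) := hji
        calc (j : ℕ) < (iF : ℕ) := this
          _ = (l q : ℕ) := by rw [h]
          _ < i q := hl q hq
      · simpa only [hl'_def, if_neg h] using hl q hq
    refine ⟨t, hbm' iF, ?_⟩
    rw [hP]
    refine mono_mem_mono (Ideal.subset_span ⟨_, hBmem' l' hl', rfl⟩) ?_
    rw [Finsupp.le_def]
    intro k
    rw [Finsupp.add_apply, fupdate_apply, fsum_apply]
    simp only [Finsupp.single_apply]
    by_cases hk : k = iF
    · have hzero : ∀ q ∈ Finset.Icc 1 r, (if l' q = k then α q else 0) = 0 := by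
        intro q hq
        refine if_neg ?_
        by_cases h : l q = iF
        · simp only [hl'_def, if_pos h]; rw [hk]; exact hjiF
        · simp only [hl'_def, if_neg h]; rw [hk]; exact h
      rw [Finset.sum_eq_zero hzero]
      exact Nat.zero_le _
    · by_cases hkj : k = j
      · have hterm : ∀ q ∈ Finset.Icc 1 r, (if l' q = k then α q else 0)
            = (if l q = k then α q else 0) + (Finsupp.single (l q) (α q)) iF := by
          intro q _
          rw [Finsupp.single_apply]
          by_cases h : l q = iF
          · rw [if_pos (show l' q = k by
                simp only [hl'_def, if_pos h]; exact hkj.symm),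
              if_pos h, if_neg (show ¬ l q = k by
                rw [h]; exact fun hc => hk hc.symm), zero_add]
          · rw [if_neg h, add_zero]
            simp only [hl'_def, if_neg h]
        rw [Finset.sum_congr rfl hterm, Finset.sum_add_distrib, if_neg hk,
          if_pos hkj.symm, ht_def, fsum_apply]
        refine add_le_add ?_ le_rfl
        have hbk := hbm' k
        rw [fsum_apply] at hbk
        simpa only [Finsupp.single_apply] using hbk
      · have hterm : ∀ q ∈ Finset.Icc 1 r, (if l' q = k then α q else 0)
            = (if l q = k then α q else 0) := by
          intro q _
          by_cases h : l q = iF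
          · rw [if_neg (show ¬ l q = k by rw [h]; exact fun hc => hk hc.symm),
              if_neg (show ¬ l' q = k by
                simp only [hl'_def, if_pos h]; exact fun hc => hkj hc.symm)]
          · simp only [hl'_def, if_neg h]
        rw [Finset.sum_congr rfl hterm, if_neg hk, if_neg (fun hc => hkj hc.symm),
          add_zero]
        have hbk := hbm' k
        rw [fsum_apply] at hbk
        simpa only [Finsupp.single_apply] using hbk
  · -- u ∈ P
    rw [hu, hP]
    refine Ideal.subset_span ⟨_, hBmem' a ?_, rfl⟩
    intro q hq
    have := ha q hq
    omega
  · -- minimality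
    intro J hJ huJ
    rw [hu] at huJ
    rw [hP, Ideal.span_le]
    rintro _ ⟨b, hbB, rfl⟩
    obtain ⟨l, hl, rfl⟩ := hBmem b hbB
    -- the key induction
    have key : ∀ k, k ≤ r →
        (monomial ((∑ q ∈ Finset.Icc 1 k, Finsupp.single (l q) (α q))
          + ∑ q ∈ Finset.Icc (k + 1) r, Finsupp.single (a q) (α q)) (1 : K)) ∈ J := by
      intro k
      induction k with
      | zero =>
        intro _
        simpa using huJ
      | succ k ih =>
        intro hk1
        have hv := ih (by omega)
        set q0 := k + 1 with hq0_def
        have hq0 : q0 ∈ Finset.Icc 1 r := by rw [Finset.mem_Icc]; omega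
        have hsplit2 : ∑ q ∈ Finset.Icc (k + 1) r, Finsupp.single (a q) (α q)
            = Finsupp.single (a q0) (α q0)
              + ∑ q ∈ Finset.Icc (k + 2) r, Finsupp.single (a q) (α q) := by
          rw [show Finset.Icc (k + 2) r = Finset.Ioc (k + 1) r from Finset.Icc_add_one_left_eq_Ioc _ _,
            ← Finset.Ioc_insert_left hk1, Finset.sum_insert (by simp)]
        have hsplit1 : ∑ q ∈ Finset.Icc 1 (k + 1), Finsupp.single (l q) (α q)
            = (∑ q ∈ Finset.Icc 1 k, Finsupp.single (l q) (α q))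
              + Finsupp.single (l q0) (α q0) := by
          have hins : Finset.Icc 1 (k + 1) = insert (k + 1) (Finset.Icc 1 k) := by
            ext x
            simp only [Finset.mem_Icc, Finset.mem_insert]
            omega
          rw [hins, Finset.sum_insert (by simp), add_comm]
        set W : Fin n →₀ ℕ := (∑ q ∈ Finset.Icc 1 k, Finsupp.single (l q) (α q))
          + ∑ q ∈ Finset.Icc (k + 2) r, Finsupp.single (a q) (α q) with hW_def
        set v : Fin n →₀ ℕ := (∑ q ∈ Finset.Icc 1 k, Finsupp.single (l q) (α q))
          + ∑ q ∈ Finset.Icc (k + 1) r, Finsupp.single (a q) (α q) with hv_def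
        have hvW : v = W + Finsupp.single (a q0) (α q0) := by
          rw [hv_def, hW_def, hsplit2]; abel
        -- every index appearing in W differs from `a q0`
        have hWa : W (a q0) = 0 := by
          rw [hW_def, Finsupp.add_apply, fsum_apply, fsum_apply]
          rw [Finset.sum_eq_zero, Finset.sum_eq_zero, add_zero]
          · intro q hq
            rw [Finset.mem_Icc] at hq
            have hqIcc : q ∈ Finset.Icc 1 r := by rw [Finset.mem_Icc]; omega
            have hlt : i q0 < i q := himono ⟨by omega, by omega⟩ ⟨by omega, by omega⟩ (by omega)
            have h1 := ha q hqIcc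
            have h2 := ha q0 hq0
            rw [Finsupp.single_apply, if_neg]
            intro hcon
            have : (a q : ℕ) = (a q0 : ℕ) := by rw [hcon]
            omega
          · intro q hq
            rw [Finset.mem_Icc] at hq
            have hqIcc : q ∈ Finset.Icc 1 r := by rw [Finset.mem_Icc]; omega
            have hlt : i q < i q0 := himono ⟨by omega, by omega⟩ ⟨by omega, by omega⟩ (by omega)
            have h2 := ha q0 hq0
            have h3 := hl q hqIcc
            rw [Finsupp.single_apply, if_neg]
            intro hcon
            have : (l q : ℕ) = (a q0 : ℕ) := by rw [hcon]
            omega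
        have hva : v (a q0) = α q0 := by
          rw [hvW, Finsupp.add_apply, hWa, Finsupp.single_apply, if_pos rfl, zero_add]
        have hupdate : Finsupp.update v (a q0) 0 = W := by
          ext k'
          rw [fupdate_apply]
          by_cases h : k' = a q0
          · rw [if_pos h, h, hWa]
          · rw [if_neg h, hvW, Finsupp.add_apply, Finsupp.single_apply,
              if_neg (fun hc => h hc.symm), add_zero]
        have hgoal : (∑ q ∈ Finset.Icc 1 (k + 1), Finsupp.single (l q) (α q))
            + ∑ q ∈ Finset.Icc (k + 1 + 1) r, Finsupp.single (a q) (α q)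
            = W + Finsupp.single (l q0) (α q0) := by
          rw [hsplit1, hW_def]; abel
        rw [hgoal]
        by_cases hcase : l q0 = a q0
        · rw [hcase, ← hvW]
          exact hv
        · have hlq0 : (l q0 : ℕ) < i q0 := hl q0 hq0
          have haq0 := ha q0 hq0
          have hlta : l q0 < a q0 := by
            rw [Fin.lt_def]
            have : (l q0 : ℕ) ≠ (a q0 : ℕ) := fun hc => hcase (Fin.ext hc)
            omega
          have step := sbt_step hJ hv hlta
          rw [hupdate, hva] at step
          exact step
    have := key r le_rfl
    rw [show Finset.Icc (r + 1) r = ∅ from Finset.Icc_eq_empty (by omega)] at this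
    simpa using this
end

section
/- Let 1 ≤ j ≤ j' ≤ n and let α ≥ β be positive integers. Then ⟨x_j^α⟩_d ⊆ ⟨x_{j'}^β⟩_d, i.e., every d-fixed monomial ideal of S containing x_{j'}^β contains the smallest d-fixed ideal containing x_j^α. -/
open MvPolynomial

/-- `c 0, …, c s` is the `d`-decomposition of `a`:
`a = Σ_{t=0}^s (c t) * (d t)` with `c t < d (t+1) / d t` for `t < s`. -/
def IsDDecomp (d : ℕ → ℕ) (s : ℕ) (a : ℕ) (c : ℕ → ℕ) : Prop :=
  a = ∑ t ∈ Finset.range (s + 1), c t * d t ∧ ∀ t < s, c t < d (t + 1) / d t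

/-- `a ≤_d b`: the coefficients of the `d`-decomposition of `a` are componentwise at
most those of `b`. -/
def dLE (d : ℕ → ℕ) (s : ℕ) (a b : ℕ) : Prop :=
  ∃ ca cb : ℕ → ℕ, IsDDecomp d s a ca ∧ IsDDecomp d s b cb ∧ ∀ t ≤ s, ca t ≤ cb t

/-- A monomial ideal `I` is `d`-fixed if for every monomial `u ∈ I`, all `j < i` and
every `t ≤_d ν_i(u)`, the monomial `u · x_j^t / x_i^t` lies in `I`. -/
def IsDFixed (d : ℕ → ℕ) (s : ℕ) {n : ℕ} {K : Type*} [Field K]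
    (I : Ideal (MvPolynomial (Fin n) K)) : Prop :=
  IsMonomialIdeal I ∧
    ∀ m : Fin n →₀ ℕ, (monomial m (1 : K) : MvPolynomial (Fin n) K) ∈ I →
      ∀ j i : Fin n, j < i → ∀ t : ℕ, dLE d s t (m i) →
        (monomial (m - Finsupp.single i t + Finsupp.single j t) (1 : K) :
          MvPolynomial (Fin n) K) ∈ I

/-- `⟨U⟩_d`: the smallest `d`-fixed ideal containing `U`, i.e. the intersection of all
`d`-fixed ideals containing `U`. -/
noncomputable def dFixedSpan (d : ℕ → ℕ) (s : ℕ) {n : ℕ} {K : Type*} [Field K]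
    (U : Set (MvPolynomial (Fin n) K)) : Ideal (MvPolynomial (Fin n) K) :=
  sInf {J : Ideal (MvPolynomial (Fin n) K) | IsDFixed d s J ∧ U ⊆ ↑J}

def ddecompCoeff (d : ℕ → ℕ) (s a t : ℕ) : ℕ :=
  if t = s then a / d s else (a % d (t + 1)) / d t

lemma exists_ddecomp (d : ℕ → ℕ) (s : ℕ) (hd0 : d 0 = 1)
    (hdvd : ∀ t < s, d t ∣ d (t + 1)) (hdlt : ∀ t < s, d t < d (t + 1)) (a : ℕ) :
    ∃ c : ℕ → ℕ, IsDDecomp d s a c := by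
  have hpos : ∀ t ≤ s, 0 < d t := by
    intro t ht
    induction t with
    | zero => simp [hd0]
    | succ k ih =>
      have hk : k < s := by omega
      exact lt_trans (ih (by omega)) (hdlt k hk)
  refine ⟨ddecompCoeff d s a, ?_, ?_⟩
  · have key : ∀ k ≤ s, ∑ t ∈ Finset.range k,
        ddecompCoeff d s a t * d t = a % d k := by
      intro k hk
      induction k with
      | zero => simp [hd0, Nat.mod_one]
      | succ m ih =>
        rw [Finset.sum_range_succ, ih (by omega)]
        have hm : m < s := by omega
        rw [ddecompCoeff, if_neg (by omega)]
        have h1 : a % d (m + 1) % d m = a % d m := Nat.mod_mod_of_dvd a (hdvd m hm)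
        have h2 := Nat.mod_add_div' (a % d (m + 1)) (d m)
        omega
    rw [Finset.sum_range_succ, key s le_rfl, ddecompCoeff, if_pos rfl]
    have := Nat.mod_add_div' a (d s)
    omega
  · intro t ht
    rw [ddecompCoeff, if_neg (by omega)]
    exact Nat.div_lt_div_of_lt_of_dvd (hdvd t ht)
      (Nat.mod_lt _ (hpos (t + 1) (by omega)))

/-- If `1 ≤ j ≤ j' ≤ n` and `α ≥ β ≥ 1`, then `⟨x_j^α⟩_d ⊆ ⟨x_{j'}^β⟩_d`. -/
theorem dfixed_span_pow_le {n : ℕ} (hn : 2 ≤ n) {K : Type*} [Field K]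
    (s : ℕ) (d : ℕ → ℕ) (hd0 : d 0 = 1)
    (hdvd : ∀ t < s, d t ∣ d (t + 1)) (hdlt : ∀ t < s, d t < d (t + 1))
    (j j' : Fin n) (hjj : j ≤ j') (α β : ℕ) (hβ : 1 ≤ β) (hβα : β ≤ α) :
    dFixedSpan d s {(X j : MvPolynomial (Fin n) K) ^ α} ≤
      dFixedSpan d s {(X j' : MvPolynomial (Fin n) K) ^ β} := by
  apply sInf_le_sInf
  rintro J ⟨hJ, hmem⟩
  refine ⟨hJ, ?_⟩
  simp only [Set.singleton_subset_iff, SetLike.mem_coe] at hmem ⊢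
  have hα : (X j' : MvPolynomial (Fin n) K) ^ α ∈ J := by
    have h : (X j' : MvPolynomial (Fin n) K) ^ α = X j' ^ (α - β) * X j' ^ β := by
      rw [← pow_add]; congr 1; omega
    rw [h]; exact J.mul_mem_left _ hmem
  rcases eq_or_lt_of_le hjj with rfl | hlt
  · exact hα
  · obtain ⟨c, hc⟩ := exists_ddecomp d s hd0 hdvd hdlt α
    have hdle : dLE d s α ((Finsupp.single j' α) j') := by
      rw [Finsupp.single_eq_same]
      exact ⟨c, c, hc, hc, fun _ _ => le_rfl⟩
    have := hJ.2 (Finsupp.single j' α) (by rwa [← X_pow_eq_monomial]) j j' hlt α hdle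
    have heq : Finsupp.single j' α - Finsupp.single j' α + Finsupp.single j α =
        Finsupp.single j α := by simp
    rw [heq] at this
    rwa [X_pow_eq_monomial]
end

section
/- Let n ≥ 2, let 1 ≤ i_1 < i_2 < ⋯ < i_r = n be integers, and let α_1 < α_2 < ⋯ < α_r be positive integers with d-decompositions α_q = Σ_{t=0}^{s} α_{qt} d_t. Then ⟨x_{i_1}^{α_1}, x_{i_2}^{α_2}, …, x_{i_r}^{α_r}⟩_d = Σ_{q=1}^{r} ∏_{t=0}^{s} ((x_1^{d_t}, x_2^{d_t}, …, x_{i_q}^{d_t}))^{α_{qt}}. -/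
open MvPolynomial

section Num
variable (d : ℕ → ℕ) (s : ℕ)

/-- partial value of a decomposition -/
def dVal (c : ℕ → ℕ) (p : ℕ) : ℕ := ∑ τ ∈ Finset.range p, c τ * d τ

lemma dpos (hd0 : d 0 = 1) (hdlt : ∀ t < s, d t < d (t + 1)) :
    ∀ p ≤ s, 0 < d p := by
  intro p hp
  cases p with
  | zero => simp [hd0]
  | succ q => exact lt_of_le_of_lt (Nat.zero_le _) (hdlt q (by omega))

lemma dval_lt (hd0 : d 0 = 1) (hdvd : ∀ t < s, d t ∣ d (t + 1))
    (hdlt : ∀ t < s, d t < d (t + 1)) :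
    ∀ p ≤ s, ∀ c : ℕ → ℕ, (∀ τ < p, c τ < d (τ + 1) / d τ) →
      dVal d c p < d p := by
  intro p
  induction p with
  | zero => intro _ c _; simp [dVal, hd0]
  | succ q ih =>
    intro hq c hc
    have hq' : q < s := by omega
    have hdq : 0 < d q := dpos d s hd0 hdlt q (by omega)
    have hdq1 : d (q + 1) = (d (q + 1) / d q) * d q :=
      (Nat.div_mul_cancel (hdvd q hq')).symm
    have h1 : dVal d c q < d q := ih (by omega) c (fun τ hτ => hc τ (by omega))
    have h2 : c q < d (q + 1) / d q := hc q (by omega)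
    have h4 : dVal d c (q + 1) = dVal d c q + c q * d q := Finset.sum_range_succ _ _
    have h3 : c q * d q + d q ≤ (d (q+1) / d q) * d q := by
      have h5 := Nat.succ_le_of_lt h2
      calc c q * d q + d q = (c q + 1) * d q := by ring
      _ ≤ (d (q+1) / d q) * d q := Nat.mul_le_mul_right _ h5
    omega

/-- The key splitting lemma. -/
lemma split (hd0 : d 0 = 1) (hdvd : ∀ t < s, d t ∣ d (t + 1))
    (hdlt : ∀ t < s, d t < d (t + 1)) :
    ∀ p ≤ s, ∀ a m t : ℕ → ℕ,
      (∀ τ < p, a τ < d (τ + 1) / d τ) →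
      (∀ τ < p, m τ < d (τ + 1) / d τ) →
      (∀ τ ≤ p, t τ ≤ m τ) →
      dVal d a (p+1) ≤ dVal d m (p+1) →
      ∃ β : ℕ → ℕ, (∀ τ, β τ ≤ a τ) ∧ dVal d β (p+1) ≤ dVal d t (p+1) ∧
        dVal d a (p+1) + dVal d t (p+1) ≤ dVal d m (p+1) + dVal d β (p+1) := by
  intro p
  induction p with
  | zero =>
    intro _ a m t _ _ htm hAM
    refine ⟨fun τ => min (a τ) (t τ), fun τ => min_le_left _ _, ?_, ?_⟩ <;>
    · simp only [dVal, zero_add, Finset.sum_range_one, hd0, mul_one] at *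
      have := htm 0 (le_refl 0)
      omega
  | succ q ih =>
    intro hq a m t ha hm htm hAM
    have hq' : q ≤ s := by omega
    set dp := d (q + 1) with hdp
    have hdppos : 0 < dp := dpos d s hd0 hdlt (q+1) hq
    have hA0 : dVal d a (q+1) < dp := dval_lt d s hd0 hdvd hdlt (q+1) hq a
      (fun τ hτ => ha τ (by omega))
    have hM0 : dVal d m (q+1) < dp := dval_lt d s hd0 hdvd hdlt (q+1) hq m
      (fun τ hτ => hm τ (by omega))
    have hT0 : dVal d t (q+1) < dp := dval_lt d s hd0 hdvd hdlt (q+1) hq t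
      (fun τ hτ => lt_of_le_of_lt (htm τ (by omega)) (hm τ (by omega)))
    have hsA : dVal d a (q+1+1) = dVal d a (q+1) + a (q+1) * dp := Finset.sum_range_succ _ _
    have hsM : dVal d m (q+1+1) = dVal d m (q+1) + m (q+1) * dp := Finset.sum_range_succ _ _
    have hsT : dVal d t (q+1+1) = dVal d t (q+1) + t (q+1) * dp := Finset.sum_range_succ _ _
    have hite : ∀ (β₀ : ℕ → ℕ) (v : ℕ),
        dVal d (fun τ => if τ = q+1 then v else β₀ τ) (q+1+1)
          = dVal d β₀ (q+1) + v * dp := by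
      intro β₀ v
      show (∑ τ ∈ Finset.range (q+1+1), (if τ = q+1 then v else β₀ τ) * d τ) = _
      rw [Finset.sum_range_succ, if_pos rfl]
      congr 1
      apply Finset.sum_congr rfl
      intro τ hτ
      simp only [Finset.mem_range] at hτ
      rw [if_neg (by omega)]
    have hap : a (q+1) ≤ m (q+1) := by
      by_contra h
      push_neg at h
      have : (m (q+1) + 1) * dp ≤ a (q+1) * dp := Nat.mul_le_mul_right _ h
      nlinarith [hsA, hsM]
    have hTleM : dVal d t (q+1+1) ≤ dVal d m (q+1+1) := by
      apply Finset.sum_le_sum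
      intro τ hτ
      simp only [Finset.mem_range] at hτ
      exact Nat.mul_le_mul_right _ (htm τ (by omega))
    rcases lt_or_ge (a (q+1)) (t (q+1)) with h1 | h1
    · refine ⟨a, fun τ => le_refl _, ?_, ?_⟩
      · have h1' : a (q+1) * dp + dp ≤ t (q+1) * dp := by
          have h1'' := Nat.mul_le_mul_right dp (Nat.succ_le_of_lt h1)
          rwa [Nat.succ_mul] at h1''
        omega
      · omega
    · rcases lt_or_ge (a (q+1)) (m (q+1)) with h2 | h2
      · obtain ⟨β₀, hβ₀le, hβ₀T, hβ₀ineq⟩ := ih hq' a (fun τ => max (a τ) (t τ)) t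
          (fun τ hτ => ha τ (by omega))
          (fun τ hτ => max_lt (ha τ (by omega))
            (lt_of_le_of_lt (htm τ (by omega)) (hm τ (by omega))))
          (fun τ hτ => le_max_right _ _)
          (Finset.sum_le_sum (fun τ _ => Nat.mul_le_mul_right _ (le_max_left _ _)))
        have hMhat : dVal d (fun τ => max (a τ) (t τ)) (q+1) < dp :=
          dval_lt d s hd0 hdvd hdlt (q+1) hq _ (fun τ hτ => max_lt (ha τ (by omega))
            (lt_of_le_of_lt (htm τ (by omega)) (hm τ (by omega))))
        have hsB := hite β₀ (t (q+1))
        have hm2 : a (q+1) * dp + dp ≤ m (q+1) * dp := by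
          have h2'' := Nat.mul_le_mul_right dp (Nat.succ_le_of_lt h2)
          rwa [Nat.succ_mul] at h2''
        refine ⟨fun τ => if τ = q+1 then t (q+1) else β₀ τ, ?_, by omega, by omega⟩
        intro τ
        by_cases hτ : τ = q+1
        · simpa [hτ] using h1
        · simpa [hτ] using hβ₀le τ
      · have heq : a (q+1) = m (q+1) := le_antisymm hap h2
        have hA0M0 : dVal d a (q+1) ≤ dVal d m (q+1) := by
          rw [heq] at hsA
          omega
        obtain ⟨β₀, hβ₀le, hβ₀T, hβ₀ineq⟩ := ih hq' a m t
          (fun τ hτ => ha τ (by omega)) (fun τ hτ => hm τ (by omega))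
          (fun τ hτ => htm τ (by omega)) hA0M0
        have hsB := hite β₀ (t (q+1))
        have hm2 : a (q+1) * dp = m (q+1) * dp := by rw [heq]
        refine ⟨fun τ => if τ = q+1 then t (q+1) else β₀ τ, ?_, by omega, by omega⟩
        intro τ
        by_cases hτ : τ = q+1
        · simpa [hτ] using h1
        · simpa [hτ] using hβ₀le τ

end Num


section Mono
variable {n : ℕ} {K : Type*} [Field K]

/-- the ideal of polynomials all of whose monomials are dominated by some element of A -/
def monDomIdeal (A : Set (Fin n →₀ ℕ)) : Ideal (MvPolynomial (Fin n) K) where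
  carrier := {p | ∀ u ∈ p.support, ∃ a ∈ A, a ≤ u}
  zero_mem' := by simp
  add_mem' := by
    intro p q hp hq u hu
    rcases Finset.mem_union.mp (MvPolynomial.support_add hu) with h | h
    · exact hp u h
    · exact hq u h
  smul_mem' := by
    intro cp p hp u hu
    have h := MvPolynomial.support_mul cp p hu
    rw [Finset.mem_add] at h
    obtain ⟨v, hv, w, hw, rfl⟩ := h
    obtain ⟨a, ha, haw⟩ := hp w hw
    exact ⟨a, ha, le_trans haw (le_add_self)⟩

lemma support_mono_one (a : Fin n →₀ ℕ) :
    (monomial a (1 : K)).support = {a} := by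
  classical
  rw [MvPolynomial.support_monomial, if_neg one_ne_zero]

lemma mem_span_mono_iff (A : Set (Fin n →₀ ℕ)) (m : Fin n →₀ ℕ) :
    (monomial m (1 : K)) ∈ Ideal.span ((fun a => (monomial a (1 : K))) '' A) ↔
      ∃ a ∈ A, a ≤ m := by
  constructor
  · intro h
    have hle : Ideal.span ((fun a => (monomial a (1 : K))) '' A) ≤ monDomIdeal A := by
      rw [Ideal.span_le]
      rintro _ ⟨a, ha, rfl⟩
      intro u hu
      rw [support_mono_one] at hu
      rcases Finset.mem_singleton.mp hu with rfl
      exact ⟨_, ha, le_refl _⟩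
    have h2 := hle h
    have hm : m ∈ (monomial m (1 : K)).support := by
      rw [support_mono_one]
      exact Finset.mem_singleton_self m
    exact h2 m hm
  · rintro ⟨a, ha, hle⟩
    have : (monomial m (1 : K)) = (monomial (m - a) (1:K)) * (monomial a (1:K)) := by
      rw [MvPolynomial.monomial_mul, tsub_add_cancel_of_le hle, one_mul]
    rw [this]
    exact Ideal.mul_mem_left _ _ (Ideal.subset_span ⟨a, ha, rfl⟩)

lemma spanMono_mul (A B : Set (Fin n →₀ ℕ)) :
    Ideal.span ((fun a => (monomial a (1 : K))) '' A) *
      Ideal.span ((fun a => (monomial a (1 : K))) '' B) =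
    Ideal.span ((fun a => (monomial a (1 : K))) ''
      {u | ∃ a ∈ A, ∃ b ∈ B, u = a + b}) := by
  rw [Ideal.span_mul_span]
  congr 1
  ext p
  simp only [Set.mem_iUnion, Set.mem_image, Set.mem_singleton_iff, Set.mem_setOf_eq]
  constructor
  · rintro ⟨_, ⟨⟨a, ha, rfl⟩, _, ⟨b, hb, rfl⟩, rfl⟩⟩
    exact ⟨a + b, ⟨a, ha, b, hb, rfl⟩, by dsimp only; rw [MvPolynomial.monomial_mul, one_mul]⟩
  · rintro ⟨_, ⟨a, ha, b, hb, rfl⟩, rfl⟩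
    exact ⟨_, ⟨a, ha, rfl⟩, _, ⟨b, hb, rfl⟩, by dsimp only; rw [MvPolynomial.monomial_mul, one_mul]⟩

lemma mono_zero_span_top :
    (⊤ : Ideal (MvPolynomial (Fin n) K)) =
      Ideal.span ((fun a => (monomial a (1 : K))) '' {0}) := by
  rw [Set.image_singleton]
  have h1 : (monomial (0 : Fin n →₀ ℕ) (1 : K)) = 1 := by simp
  rw [h1, Ideal.span_singleton_one]

lemma spanMono_pow (A : Set (Fin n →₀ ℕ)) (c : ℕ) :
    (Ideal.span ((fun a => (monomial a (1 : K))) '' A)) ^ c =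
    Ideal.span ((fun a => (monomial a (1 : K))) ''
      {u | ∃ g : ℕ → (Fin n →₀ ℕ), (∀ k < c, g k ∈ A) ∧
        u = ∑ k ∈ Finset.range c, g k}) := by
  induction c with
  | zero =>
    rw [pow_zero, Ideal.one_eq_top]
    have hset : {u : Fin n →₀ ℕ | ∃ g : ℕ → (Fin n →₀ ℕ), (∀ k < 0, g k ∈ A) ∧
        u = ∑ k ∈ Finset.range 0, g k} = {0} := by
      ext u
      simp only [Set.mem_setOf_eq, Set.mem_singleton_iff]
      constructor
      · rintro ⟨g, _, rfl⟩; simp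
      · rintro rfl; exact ⟨fun _ => 0, fun k hk => absurd hk (Nat.not_lt_zero k), by simp⟩
    rw [hset]
    exact mono_zero_span_top
  | succ c ih =>
    rw [pow_succ, ih, spanMono_mul]
    have hset : {u : Fin n →₀ ℕ | ∃ a ∈ {u | ∃ g : ℕ → (Fin n →₀ ℕ),
          (∀ k < c, g k ∈ A) ∧ u = ∑ k ∈ Finset.range c, g k}, ∃ b ∈ A, u = a + b} =
        {u : Fin n →₀ ℕ | ∃ g : ℕ → (Fin n →₀ ℕ), (∀ k < c + 1, g k ∈ A) ∧
          u = ∑ k ∈ Finset.range (c+1), g k} := by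
      ext u
      simp only [Set.mem_setOf_eq]
      constructor
      · rintro ⟨_, ⟨g, hg, rfl⟩, b, hb, rfl⟩
        refine ⟨fun k => if k = c then b else g k, ?_, ?_⟩
        · intro k hk
          dsimp only
          by_cases h : k = c
          · rw [if_pos h]; exact hb
          · rw [if_neg h]; exact hg k (by omega)
        · rw [Finset.sum_range_succ, if_pos rfl]
          rw [add_comm (∑ k ∈ Finset.range c, g k) b, add_comm _ b]
          congr 1
          apply Finset.sum_congr rfl
          intro k hk
          rw [if_neg (by simp only [Finset.mem_range] at hk; omega)]
      · rintro ⟨g, hg, rfl⟩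
        refine ⟨∑ k ∈ Finset.range c, g k, ⟨g, fun k hk => hg k (by omega), rfl⟩,
          g c, hg c (by omega), ?_⟩
        rw [Finset.sum_range_succ]
    rw [hset]

lemma spanMono_prod (F : Finset ℕ) (A : ℕ → Set (Fin n →₀ ℕ)) (c : ℕ → ℕ) :
    (∏ t ∈ F, (Ideal.span ((fun a => (monomial a (1 : K))) '' A t)) ^ c t) =
    Ideal.span ((fun a => (monomial a (1 : K))) ''
      {u | ∃ b : ℕ → ℕ → (Fin n →₀ ℕ), (∀ t ∈ F, ∀ k < c t, b t k ∈ A t) ∧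
        u = ∑ t ∈ F, ∑ k ∈ Finset.range (c t), b t k}) := by
  induction F using Finset.induction_on with
  | empty =>
    rw [Finset.prod_empty, Ideal.one_eq_top]
    have hset : {u : Fin n →₀ ℕ | ∃ b : ℕ → ℕ → (Fin n →₀ ℕ),
        (∀ t ∈ (∅ : Finset ℕ), ∀ k < c t, b t k ∈ A t) ∧
        u = ∑ t ∈ (∅ : Finset ℕ), ∑ k ∈ Finset.range (c t), b t k} = {0} := by
      ext u
      simp only [Set.mem_setOf_eq, Set.mem_singleton_iff]
      constructor
      · rintro ⟨b, _, rfl⟩; simp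
      · rintro rfl; exact ⟨fun _ _ => 0, by simp, by simp⟩
    rw [hset]
    exact mono_zero_span_top
  | insert _ _ ht ih =>
    rename_i t₀ F
    rw [Finset.prod_insert ht, spanMono_pow, ih, spanMono_mul]
    have hset : {u : Fin n →₀ ℕ |
        ∃ a ∈ {u | ∃ g : ℕ → (Fin n →₀ ℕ), (∀ k < c t₀, g k ∈ A t₀) ∧
          u = ∑ k ∈ Finset.range (c t₀), g k},
        ∃ b ∈ {u | ∃ b : ℕ → ℕ → (Fin n →₀ ℕ), (∀ t ∈ F, ∀ k < c t, b t k ∈ A t) ∧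
          u = ∑ t ∈ F, ∑ k ∈ Finset.range (c t), b t k}, u = a + b} =
        {u : Fin n →₀ ℕ | ∃ b : ℕ → ℕ → (Fin n →₀ ℕ),
          (∀ t ∈ insert t₀ F, ∀ k < c t, b t k ∈ A t) ∧
          u = ∑ t ∈ insert t₀ F, ∑ k ∈ Finset.range (c t), b t k} := by
      ext u
      simp only [Set.mem_setOf_eq]
      constructor
      · rintro ⟨_, ⟨g, hg, rfl⟩, _, ⟨b, hb, rfl⟩, rfl⟩
        refine ⟨fun t k => if t = t₀ then g k else b t k, ?_, ?_⟩
        · intro t htF k hk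
          dsimp only
          by_cases h : t = t₀
          · subst h; rw [if_pos rfl]; exact hg k hk
          · rw [if_neg h]
            exact hb t ((Finset.mem_insert.mp htF).resolve_left h) k hk
        · rw [Finset.sum_insert ht]
          congr 1
          · apply Finset.sum_congr rfl; intro k _; dsimp only; rw [if_pos rfl]
          · apply Finset.sum_congr rfl
            intro t htF
            have hne : t ≠ t₀ := by rintro rfl; exact ht htF
            apply Finset.sum_congr rfl
            intro k _
            dsimp only
            rw [if_neg hne]
      · rintro ⟨b, hb, rfl⟩
        refine ⟨(∑ k ∈ Finset.range (c t₀), b t₀ k),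
          ⟨b t₀, fun k hk => hb t₀ (Finset.mem_insert_self _ _) k hk, rfl⟩,
          (∑ t ∈ F, ∑ k ∈ Finset.range (c t), b t k),
          ⟨b, fun t htF k hk => hb t (Finset.mem_insert_of_mem htF) k hk, rfl⟩, ?_⟩
        rw [Finset.sum_insert ht]
    rw [hset]

lemma sum_span_eq (F : Finset ℕ) (T : ℕ → Set (MvPolynomial (Fin n) K)) :
    (∑ q ∈ F, Ideal.span (T q)) = Ideal.span (⋃ q ∈ F, T q) := by
  induction F using Finset.induction_on with
  | empty => simp [Ideal.span_empty]
  | insert _ _ ht ih =>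
    rename_i q₀ F
    rw [Finset.sum_insert ht, Finset.set_biUnion_insert, Ideal.span_union, ← ih,
      Submodule.add_eq_sup]

/-- construct a function with prescribed fiber cardinalities -/
lemma exists_fiber_card (hn : 0 < n) :
    ∀ (cc : ℕ) (w : Fin n → ℕ), (∑ l, w l = cc) →
      ∃ g : ℕ → Fin n, ∀ l, ((Finset.range cc).filter (fun k => g k = l)).card = w l := by
  intro cc
  induction cc with
  | zero =>
    intro w hw
    refine ⟨fun _ => ⟨0, hn⟩, fun l => ?_⟩
    simp only [Finset.range_zero, Finset.filter_empty, Finset.card_empty]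
    exact ((Finset.sum_eq_zero_iff).mp hw l (Finset.mem_univ l)).symm
  | succ cc ih =>
    intro w hw
    have hex : ∃ l₀, w l₀ ≠ 0 := by
      by_contra h
      push_neg at h
      rw [Finset.sum_eq_zero (fun l _ => h l)] at hw
      omega
    obtain ⟨l₀, hl₀⟩ := hex
    have hsplit : ∑ l, w l = ∑ l ∈ Finset.univ \ {l₀}, w l + w l₀ := by
      rw [Finset.sum_eq_sum_sdiff_singleton_add (Finset.mem_univ l₀)]
    have hw' : ∑ l, Function.update w l₀ (w l₀ - 1) l = cc := by
      rw [Finset.sum_update_of_mem (Finset.mem_univ l₀)]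
      omega
    obtain ⟨g', hg'⟩ := ih _ hw'
    refine ⟨fun k => if k = cc then l₀ else g' k, fun l => ?_⟩
    rw [Finset.range_add_one, Finset.filter_insert]
    have hfil : ((Finset.range cc).filter
        (fun k => (if k = cc then l₀ else g' k) = l)) =
        ((Finset.range cc).filter (fun k => g' k = l)) := by
      apply Finset.filter_congr
      intro k hk
      simp only [Finset.mem_range] at hk
      rw [if_neg (by omega)]
    by_cases h : l = l₀
    · rw [if_pos (by simp [h]), Finset.card_insert_of_notMem (by simp), hfil, hg', h]
      rw [Function.update_self]
      omega
    · rw [if_neg (by simp only [if_pos rfl]; exact fun hh => h hh.symm), hfil, hg']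
      rw [Function.update_apply, if_neg (fun hh => h hh)]
end Mono


section PE
variable {n : ℕ} {K : Type*} [Field K]

/-- matrix form of the generators of the product ideal -/
def Emat (d : ℕ → ℕ) (s : ℕ) (iq : ℕ) (cq : ℕ → ℕ) : Set (Fin n →₀ ℕ) :=
  {u | ∃ b : Fin n → ℕ → ℕ, (∀ τ ≤ s, ∑ l, b l τ = cq τ) ∧
    (∀ l τ, b l τ ≠ 0 → (l : ℕ) < iq ∧ τ ≤ s) ∧
    ∀ l, u l = ∑ τ ∈ Finset.range (s + 1), b l τ * d τ}

lemma prod_eq_span_emat (hn : 0 < n) (d : ℕ → ℕ) (s : ℕ) (iq : ℕ) (cq : ℕ → ℕ) :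
    (∏ t ∈ Finset.range (s + 1),
      (Ideal.span ((fun a => (monomial a (1 : K))) ''
        {u : Fin n →₀ ℕ | ∃ l : Fin n, (l : ℕ) < iq ∧ u = Finsupp.single l (d t)})) ^ cq t) =
    Ideal.span ((fun a => (monomial a (1 : K))) '' Emat d s iq cq) := by
  rw [spanMono_prod]
  have hset : {u : Fin n →₀ ℕ | ∃ bb : ℕ → ℕ → (Fin n →₀ ℕ),
      (∀ t ∈ Finset.range (s+1), ∀ k < cq t, bb t k ∈
        {u : Fin n →₀ ℕ | ∃ l : Fin n, (l : ℕ) < iq ∧ u = Finsupp.single l (d t)}) ∧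
      u = ∑ t ∈ Finset.range (s+1), ∑ k ∈ Finset.range (cq t), bb t k} =
      Emat d s iq cq := by
    ext u
    simp only [Set.mem_setOf_eq, Emat]
    constructor
    · rintro ⟨bb, hbb, rfl⟩
      have hch : ∀ t k, t ≤ s → k < cq t → ∃ l : Fin n, (l : ℕ) < iq ∧
          bb t k = Finsupp.single l (d t) := by
        intro t k ht hk
        exact hbb t (Finset.mem_range.mpr (by omega)) k hk
      classical
      set L : ℕ → ℕ → Fin n := fun t k =>
        if h : t ≤ s ∧ k < cq t then Classical.choose (hch t k h.1 h.2) else ⟨0, hn⟩ with hL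
      have hLspec : ∀ t k, t ≤ s → k < cq t → ((L t k : ℕ) < iq ∧
          bb t k = Finsupp.single (L t k) (d t)) := by
        intro t k ht hk
        have h : t ≤ s ∧ k < cq t := ⟨ht, hk⟩
        simp only [hL, dif_pos h]
        exact Classical.choose_spec (hch t k ht hk)
      refine ⟨fun l τ => if τ ≤ s then
          ((Finset.range (cq τ)).filter (fun k => L τ k = l)).card else 0, ?_, ?_, ?_⟩
      · intro τ hτ
        simp only [if_pos hτ]
        exact ((Finset.card_eq_sum_card_fiberwise
          (fun k (_ : k ∈ Finset.range (cq τ)) => Finset.mem_univ (L τ k))).symm.trans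
          (Finset.card_range (cq τ)))
      · intro l τ hne
        dsimp only at hne
        by_cases hτ : τ ≤ s
        · refine ⟨?_, hτ⟩
          rw [if_pos hτ] at hne
          obtain ⟨k, hk⟩ := (Finset.card_ne_zero.mp hne).exists_mem
          rw [Finset.mem_filter, Finset.mem_range] at hk
          have := (hLspec τ k hτ hk.1).1
          rwa [hk.2] at this
        · rw [if_neg hτ] at hne
          exact absurd rfl hne
      · intro l
        rw [Finsupp.finset_sum_apply]
        apply Finset.sum_congr rfl
        intro t htmem
        simp only [Finset.mem_range] at htmem
        have ht : t ≤ s := by omega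
        dsimp only
        rw [if_pos ht, Finsupp.finset_sum_apply]
        have hterm : ∀ k ∈ Finset.range (cq t), (bb t k) l
            = if L t k = l then d t else 0 := by
          intro k hk
          rw [Finset.mem_range] at hk
          rw [(hLspec t k ht hk).2, Finsupp.single_apply]
        rw [Finset.sum_congr rfl hterm, ← Finset.sum_filter, Finset.sum_const,
          smul_eq_mul]
    · rintro ⟨b, hcol, hsupp, hrow⟩
      classical
      set G : ℕ → (ℕ → Fin n) := fun t =>
        if h : t ≤ s then Classical.choose (exists_fiber_card hn (cq t) (fun l => b l t)
          (hcol t h)) else (fun _ => ⟨0, hn⟩) with hG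
      have hGspec : ∀ t, t ≤ s → ∀ l,
          ((Finset.range (cq t)).filter (fun k => G t k = l)).card = b l t := by
        intro t ht l
        simp only [hG, dif_pos ht]
        exact Classical.choose_spec (exists_fiber_card hn (cq t) (fun l => b l t)
          (hcol t ht)) l
      refine ⟨fun t k => Finsupp.single (G t k) (d t), ?_, ?_⟩
      · intro t htmem k hk
        simp only [Finset.mem_range] at htmem
        have ht : t ≤ s := by omega
        refine ⟨G t k, ?_, rfl⟩
        have hcard : ((Finset.range (cq t)).filter (fun k' => G t k' = G t k)).card
            = b (G t k) t := hGspec t ht (G t k)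
        have hkin : k ∈ (Finset.range (cq t)).filter (fun k' => G t k' = G t k) :=
          Finset.mem_filter.mpr ⟨Finset.mem_range.mpr hk, rfl⟩
        have hbne : b (G t k) t ≠ 0 := by
          rw [← hcard]
          exact Finset.card_ne_zero_of_mem hkin
        exact (hsupp _ _ hbne).1
      · ext l
        rw [Finsupp.finset_sum_apply, hrow l]
        apply Finset.sum_congr rfl
        intro t htmem
        simp only [Finset.mem_range] at htmem
        have ht : t ≤ s := by omega
        rw [Finsupp.finset_sum_apply]
        have hterm : ∀ k ∈ Finset.range (cq t), (Finsupp.single (G t k) (d t)) l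
            = if G t k = l then d t else 0 := by
          intro k _
          rw [Finsupp.single_apply]
        rw [Finset.sum_congr rfl hterm, ← Finset.sum_filter, Finset.sum_const,
          hGspec t ht l, smul_eq_mul]
  rw [hset]
end PE


section Exch
variable {n : ℕ} {K : Type*} [Field K]

lemma emat_exchange (d : ℕ → ℕ) (s : ℕ) (hd0 : d 0 = 1)
    (hdvd : ∀ t < s, d t ∣ d (t + 1)) (hdlt : ∀ t < s, d t < d (t + 1))
    (iq : ℕ) (cq : ℕ → ℕ) (hcq : ∀ τ < s, cq τ < d (τ + 1) / d τ)
    (u : Fin n →₀ ℕ) (hu : u ∈ Emat d s iq cq) (m : Fin n →₀ ℕ) (hum : u ≤ m)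
    (j i : Fin n) (hji : j < i) (t : ℕ) (ht : dLE d s t (m i)) :
    ∃ u' ∈ Emat d s iq cq, u' ≤ m - Finsupp.single i t + Finsupp.single j t := by
  classical
  obtain ⟨ca, cb, hca, hcb, hcacb⟩ := ht
  obtain ⟨b, hcol, hsupp, hrow⟩ := hu
  have hij : i ≠ j := (ne_of_gt hji)
  have hble : ∀ l τ, τ ≤ s → b l τ ≤ cq τ := by
    intro l τ hτ
    rw [← hcol τ hτ]
    exact Finset.single_le_sum (f := fun l => b l τ) (fun _ _ => Nat.zero_le _)
      (Finset.mem_univ l)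
  have hum' := Finsupp.le_def.mp hum
  have hbsplit := split d s hd0 hdvd hdlt s (le_refl s) (fun τ => b i τ) cb ca
    (fun τ hτ => lt_of_le_of_lt (hble i τ (by omega)) (hcq τ hτ))
    (fun τ hτ => hcb.2 τ hτ)
    (fun τ hτ => hcacb τ hτ)
    (by
      simp only [dVal]
      rw [← hrow i, ← hcb.1]
      exact hum' i)
  obtain ⟨β, hβle0, hβT, hβineq⟩ := hbsplit
  have hβle : ∀ τ, β τ ≤ b i τ := hβle0
  simp only [dVal] at hβT hβineq
  rw [← hca.1] at hβT hβineq
  rw [← hcb.1] at hβineq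
  rw [← hrow i] at hβineq
  -- T ≤ M
  have htmi : t ≤ m i := by
    rw [hca.1, hcb.1]
    exact Finset.sum_le_sum (fun τ hτ => Nat.mul_le_mul_right _
      (hcacb τ (by simp only [Finset.mem_range] at hτ; omega)))
  set B := ∑ τ ∈ Finset.range (s+1), β τ * d τ with hB
  have hBA : B ≤ u i := by
    rw [hrow i]
    exact Finset.sum_le_sum (fun τ _ => Nat.mul_le_mul_right _ (hβle τ))
  set b' : Fin n → ℕ → ℕ := fun l τ =>
    if l = i then b i τ - β τ else if l = j then b j τ + β τ else b l τ with hb'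
  have hrowi : (∑ τ ∈ Finset.range (s+1), (b i τ - β τ) * d τ) + B = u i := by
    rw [hB, ← Finset.sum_add_distrib]
    rw [Finset.sum_congr rfl (fun τ (_ : τ ∈ Finset.range (s+1)) => by
      rw [← add_mul, Nat.sub_add_cancel (hβle τ)])]
    exact (hrow i).symm
  have hrowj : (∑ τ ∈ Finset.range (s+1), (b j τ + β τ) * d τ) = u j + B := by
    rw [Finset.sum_congr rfl (fun τ (_ : τ ∈ Finset.range (s+1)) =>
      add_mul (b j τ) (β τ) (d τ)), Finset.sum_add_distrib, ← hrow j]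
  refine ⟨Finsupp.equivFunOnFinite.symm
    (fun l => ∑ τ ∈ Finset.range (s+1), b' l τ * d τ), ⟨b', ?_, ?_, ?_⟩, ?_⟩
  · -- column sums
    intro τ hτ
    have hpt : ∀ l, b' l τ + (if l = i then β τ else 0)
        = b l τ + (if l = j then β τ else 0) := by
      intro l
      simp only [hb']
      by_cases hli : l = i
      · have hlj : l ≠ j := by rw [hli]; exact hij
        rw [if_pos hli, if_pos hli, if_neg hlj, hli]
        have := hβle τ
        omega
      · rw [if_neg hli, if_neg hli]
        by_cases hlj : l = j
        · rw [if_pos hlj, if_pos hlj, hlj]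
          omega
        · rw [if_neg hlj, if_neg hlj]
    have hsum := Finset.sum_congr rfl (fun l (_ : l ∈ (Finset.univ : Finset (Fin n))) => hpt l)
    rw [Finset.sum_add_distrib, Finset.sum_add_distrib,
      Finset.sum_ite_eq' Finset.univ i (fun _ => β τ),
      Finset.sum_ite_eq' Finset.univ j (fun _ => β τ),
      if_pos (Finset.mem_univ i), if_pos (Finset.mem_univ j)] at hsum
    rw [← hcol τ hτ]
    omega
  · -- support
    intro l τ hne
    simp only [hb'] at hne
    by_cases hli : l = i
    · rw [if_pos hli] at hne
      rw [hli]
      have hbi : b i τ ≠ 0 := by omega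
      exact hsupp i τ hbi
    · rw [if_neg hli] at hne
      by_cases hlj : l = j
      · rw [if_pos hlj] at hne
        rw [hlj]
        by_cases hbj : b j τ = 0
        · have hβτ : β τ ≠ 0 := by omega
          have hbi : b i τ ≠ 0 := by
            have := hβle τ
            omega
          obtain ⟨h1, h2⟩ := hsupp i τ hbi
          have hji' : (j : ℕ) < (i : ℕ) := hji
          exact ⟨by omega, h2⟩
        · exact hsupp j τ hbj
      · rw [if_neg hlj] at hne
        exact hsupp l τ hne
  · -- rows
    intro l
    rw [Finsupp.equivFunOnFinite_symm_apply_apply]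
  · -- u' ≤ m'
    rw [Finsupp.le_def]
    intro l
    rw [Finsupp.equivFunOnFinite_symm_apply_apply, Finsupp.add_apply,
      Finsupp.tsub_apply, Finsupp.single_apply, Finsupp.single_apply]
    simp only [hb']
    by_cases hli : l = i
    · have hlj : l ≠ j := by rw [hli]; exact hij
      rw [Finset.sum_congr rfl (fun τ (_ : τ ∈ Finset.range (s+1)) => by
        rw [if_pos hli])]
      rw [if_pos hli.symm, if_neg (fun h : j = l => hlj h.symm)]
      have h1 : m l = m i := by rw [hli]
      omega
    · rw [Finset.sum_congr rfl (fun τ (_ : τ ∈ Finset.range (s+1)) => by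
        rw [if_neg hli])]
      rw [if_neg (fun h : i = l => hli h.symm)]
      by_cases hlj : l = j
      · rw [Finset.sum_congr rfl (fun τ (_ : τ ∈ Finset.range (s+1)) => by
          rw [if_pos hlj])]
        rw [if_pos hlj.symm]
        have h1 : u l = u j := by rw [hlj]
        have h2 := hum' l
        omega
      · rw [Finset.sum_congr rfl (fun τ (_ : τ ∈ Finset.range (s+1)) => by
          rw [if_neg hlj])]
        rw [if_neg (fun h : j = l => hlj h.symm), ← hrow l]
        have h2 := hum' l
        omega
end Exch


section Moves
variable {n : ℕ} {K : Type*} [Field K]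

lemma emat_mem_of_dfixed (d : ℕ → ℕ) (s : ℕ)
    (iq : ℕ) (hiq1 : 1 ≤ iq) (hiqn : iq ≤ n) (cq : ℕ → ℕ)
    (hcq : ∀ τ < s, cq τ < d (τ + 1) / d τ) (αq : ℕ)
    (hαq : αq = ∑ τ ∈ Finset.range (s + 1), cq τ * d τ)
    (J : Ideal (MvPolynomial (Fin n) K))
    (hJfix : ∀ m : Fin n →₀ ℕ, (monomial m (1 : K)) ∈ J →
      ∀ j i : Fin n, j < i → ∀ t : ℕ, dLE d s t (m i) →
        (monomial (m - Finsupp.single i t + Finsupp.single j t) (1 : K)) ∈ J)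
    (hJgen : (monomial (Finsupp.single (⟨iq - 1, by omega⟩ : Fin n) αq) (1 : K)) ∈ J) :
    ∀ u ∈ Emat d s iq cq, (monomial u (1 : K)) ∈ J := by
  classical
  set l₀ : Fin n := ⟨iq - 1, by omega⟩ with hl₀
  have hl₀val : (l₀ : ℕ) = iq - 1 := rfl
  have base : ∀ u ∈ Emat d s iq cq, (∀ l : Fin n, l ≠ l₀ → u l = 0) →
      (monomial u (1 : K)) ∈ J := by
    rintro u ⟨b, hcol, hsupp, hrow⟩ hz
    have htot : ∑ l, u l = αq := by
      rw [hαq]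
      calc ∑ l, u l = ∑ l : Fin n, ∑ τ ∈ Finset.range (s+1), b l τ * d τ :=
            Finset.sum_congr rfl (fun l _ => hrow l)
      _ = ∑ τ ∈ Finset.range (s+1), ∑ l : Fin n, b l τ * d τ := Finset.sum_comm
      _ = ∑ τ ∈ Finset.range (s+1), cq τ * d τ := by
          apply Finset.sum_congr rfl
          intro τ hτ
          simp only [Finset.mem_range] at hτ
          rw [← Finset.sum_mul, hcol τ (by omega)]
    have hul₀ : u l₀ = αq := by
      rw [← htot]
      exact (Finset.sum_eq_single_of_mem l₀ (Finset.mem_univ _)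
        (fun l _ hne => hz l hne)).symm
    have hueq : u = Finsupp.single l₀ αq := by
      ext l
      rw [Finsupp.single_apply]
      by_cases h : l₀ = l
      · rw [if_pos h, ← h, hul₀]
      · rw [if_neg h]; exact hz l (fun hh => h hh.symm)
    rw [hueq]
    exact hJgen
  have key : ∀ N : ℕ, ∀ u ∈ Emat d s iq cq,
      ((Finset.univ.filter (fun l : Fin n => l ≠ l₀ ∧ u l ≠ 0)).card ≤ N) →
      (monomial u (1 : K)) ∈ J := by
    intro N
    induction N with
    | zero =>
      intro u hu hcard
      apply base u hu
      intro l hne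
      by_contra hul
      have hmem : l ∈ Finset.univ.filter (fun l : Fin n => l ≠ l₀ ∧ u l ≠ 0) :=
        Finset.mem_filter.mpr ⟨Finset.mem_univ l, hne, hul⟩
      have := Finset.card_ne_zero_of_mem hmem
      omega
    | succ N ih =>
      intro u hu hcard
      by_cases hS : (Finset.univ.filter (fun l : Fin n => l ≠ l₀ ∧ u l ≠ 0)) = ∅
      · apply base u hu
        intro l hne
        by_contra hul
        have hmem : l ∈ Finset.univ.filter (fun l : Fin n => l ≠ l₀ ∧ u l ≠ 0) :=
          Finset.mem_filter.mpr ⟨Finset.mem_univ l, hne, hul⟩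
        rw [hS] at hmem
        exact absurd hmem (Finset.notMem_empty l)
      · obtain ⟨l₁, hl₁⟩ := Finset.nonempty_of_ne_empty hS
        have hl₁mem := hl₁
        rw [Finset.mem_filter] at hl₁
        obtain ⟨-, hl₁ne, hul₁⟩ := hl₁
        obtain ⟨b, hcol, hsupp, hrow⟩ := hu
        have hble : ∀ l τ, τ ≤ s → b l τ ≤ cq τ := by
          intro l τ hτ
          rw [← hcol τ hτ]
          exact Finset.single_le_sum (f := fun l => b l τ) (fun _ _ => Nat.zero_le _)
            (Finset.mem_univ l)
        have hpairle : ∀ τ, τ ≤ s → b l₀ τ + b l₁ τ ≤ cq τ := by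
          intro τ hτ
          calc b l₀ τ + b l₁ τ
              = ∑ x ∈ ({l₀, l₁} : Finset (Fin n)), b x τ :=
                (Finset.sum_pair (f := fun x => b x τ) (fun h => hl₁ne h.symm)).symm
            _ ≤ ∑ l, b l τ := Finset.sum_le_sum_of_subset (Finset.subset_univ _)
            _ = cq τ := hcol τ hτ
        have hbl₁ : ∃ τ ∈ Finset.range (s+1), b l₁ τ ≠ 0 := by
          by_contra h
          push_neg at h
          apply hul₁
          rw [hrow l₁]
          exact Finset.sum_eq_zero (fun τ hτ => by rw [h τ hτ, zero_mul])
        obtain ⟨τ₁, hτ₁mem, hbτ₁⟩ := hbl₁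
        have hl₁iq : (l₁ : ℕ) < iq := (hsupp l₁ τ₁ hbτ₁).1
        have hl₁l₀ : l₁ < l₀ := by
          rw [Fin.lt_def, hl₀val]
          have hne' : (l₁ : ℕ) ≠ (l₀ : ℕ) := fun h => hl₁ne (Fin.ext h)
          rw [hl₀val] at hne'
          omega
        set b'' : Fin n → ℕ → ℕ := fun l τ =>
          if l = l₀ then b l₀ τ + b l₁ τ else if l = l₁ then 0 else b l τ with hb''
        set u'' := Finsupp.equivFunOnFinite.symm
          (fun l => ∑ τ ∈ Finset.range (s+1), b'' l τ * d τ) with hu''def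
        have hu''app : ∀ l, u'' l = ∑ τ ∈ Finset.range (s+1), b'' l τ * d τ :=
          fun l => Finsupp.equivFunOnFinite_symm_apply_apply _ _
        have hl₀ne₁ : l₀ ≠ l₁ := fun h => hl₁ne h.symm
        have hb''l₀ : ∀ τ, b'' l₀ τ = b l₀ τ + b l₁ τ := by
          intro τ; simp [hb'']
        have hb''l₁ : ∀ τ, b'' l₁ τ = 0 := by
          intro τ; simp [hb'', hl₁ne]
        have hb''other : ∀ l, l ≠ l₀ → l ≠ l₁ → ∀ τ, b'' l τ = b l τ := by
          intro l h0 h1 τ; simp [hb'', h0, h1]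
        have hu''l₀ : u'' l₀ = u l₀ + u l₁ := by
          rw [hu''app]
          rw [Finset.sum_congr rfl (fun τ (_ : τ ∈ Finset.range (s+1)) => by
            rw [hb''l₀ τ, add_mul])]
          rw [Finset.sum_add_distrib, ← hrow l₀, ← hrow l₁]
        have hu''l₁ : u'' l₁ = 0 := by
          rw [hu''app]
          apply Finset.sum_eq_zero
          intro τ _
          rw [hb''l₁ τ, zero_mul]
        have hu''other : ∀ l, l ≠ l₀ → l ≠ l₁ → u'' l = u l := by
          intro l h0 h1
          rw [hu''app]
          rw [Finset.sum_congr rfl (fun τ (_ : τ ∈ Finset.range (s+1)) => by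
            rw [hb''other l h0 h1 τ]), ← hrow l]
        have hu''mem : u'' ∈ Emat d s iq cq := by
          refine ⟨b'', ?_, ?_, hu''app⟩
          · intro τ hτ
            have hpt : ∀ l, b'' l τ + (if l = l₁ then b l₁ τ else 0)
                = b l τ + (if l = l₀ then b l₁ τ else 0) := by
              intro l
              by_cases h0 : l = l₀
              · have h1 : l ≠ l₁ := by rw [h0]; exact hl₀ne₁
                rw [h0, hb''l₀ τ, if_pos rfl, if_neg (h0 ▸ h1 : l₀ ≠ l₁)]
                omega
              · by_cases h1 : l = l₁
                · rw [h1, hb''l₁ τ, if_pos rfl, if_neg (h1 ▸ h0 : l₁ ≠ l₀)]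
                  omega
                · rw [hb''other l h0 h1 τ, if_neg h0, if_neg h1]
            have hsum := Finset.sum_congr rfl
              (fun l (_ : l ∈ (Finset.univ : Finset (Fin n))) => hpt l)
            rw [Finset.sum_add_distrib, Finset.sum_add_distrib,
              Finset.sum_ite_eq' Finset.univ l₁ (fun _ => b l₁ τ),
              Finset.sum_ite_eq' Finset.univ l₀ (fun _ => b l₁ τ),
              if_pos (Finset.mem_univ l₁), if_pos (Finset.mem_univ l₀)] at hsum
            rw [← hcol τ hτ]
            omega
          · intro l τ hne
            by_cases h0 : l = l₀
            · rw [h0, hb''l₀ τ] at hne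
              have hτs : τ ≤ s := by
                by_cases hb0 : b l₀ τ = 0
                · exact (hsupp l₁ τ (by omega)).2
                · exact (hsupp l₀ τ hb0).2
              rw [h0]
              exact ⟨by rw [hl₀val]; omega, hτs⟩
            · by_cases h1 : l = l₁
              · rw [h1, hb''l₁ τ] at hne
                exact absurd rfl hne
              · rw [hb''other l h0 h1 τ] at hne
                exact hsupp l τ hne
        have hsub : (Finset.univ.filter (fun l : Fin n => l ≠ l₀ ∧ u'' l ≠ 0)) ⊆
            (Finset.univ.filter (fun l : Fin n => l ≠ l₀ ∧ u l ≠ 0)).erase l₁ := by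
          intro l hl
          rw [Finset.mem_filter] at hl
          obtain ⟨-, h0, hne⟩ := hl
          have h1 : l ≠ l₁ := by
            intro h
            rw [h, hu''l₁] at hne
            exact hne rfl
          rw [Finset.mem_erase, Finset.mem_filter]
          rw [hu''other l h0 h1] at hne
          exact ⟨h1, Finset.mem_univ l, h0, hne⟩
        have hcard'' : (Finset.univ.filter
            (fun l : Fin n => l ≠ l₀ ∧ u'' l ≠ 0)).card ≤ N := by
          have h1 := Finset.card_le_card hsub
          have h2 := Finset.card_erase_of_mem hl₁mem
          have h3 := Finset.card_ne_zero_of_mem hl₁mem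
          omega
        have hmem'' := ih u'' hu''mem hcard''
        have hdle : dLE d s (u l₁) (u'' l₀) := by
          refine ⟨fun τ => b l₁ τ, fun τ => b l₀ τ + b l₁ τ, ⟨hrow l₁, ?_⟩,
            ⟨?_, ?_⟩, fun τ _ => Nat.le_add_left (b l₁ τ) (b l₀ τ)⟩
          · intro τ hτ
            exact lt_of_le_of_lt (hble l₁ τ (by omega)) (hcq τ hτ)
          · rw [hu''l₀, hrow l₀, hrow l₁, ← Finset.sum_add_distrib]
            exact Finset.sum_congr rfl (fun τ _ => by rw [add_mul])
          · intro τ hτ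
            exact lt_of_le_of_lt (hpairle τ (by omega)) (hcq τ hτ)
        have hres := hJfix u'' hmem'' l₁ l₀ hl₁l₀ (u l₁) hdle
        have heq : u'' - Finsupp.single l₀ (u l₁) + Finsupp.single l₁ (u l₁) = u := by
          ext l
          rw [Finsupp.add_apply, Finsupp.tsub_apply, Finsupp.single_apply,
            Finsupp.single_apply]
          by_cases h0 : l = l₀
          · have h1 : l ≠ l₁ := by rw [h0]; exact hl₀ne₁
            rw [if_pos (h0.symm), if_neg (fun h : l₁ = l => h1 h.symm)]
            have := hu''l₀
            rw [h0]
            omega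
          · rw [if_neg (fun h : l₀ = l => h0 h.symm)]
            by_cases h1 : l = l₁
            · rw [if_pos h1.symm]
              have := hu''l₁
              rw [h1]
              omega
            · rw [if_neg (fun h : l₁ = l => h1 h.symm)]
              rw [hu''other l h0 h1]
              omega
        rw [heq] at hres
        exact hres
  intro u hu
  exact key _ u hu (le_refl _)
end Moves


/-- Proposition: for `1 ≤ i_1 < ⋯ < i_r = n` and `α_1 < ⋯ < α_r` positive with
`d`-decompositions `α_q = Σ_t α_{qt} d_t` (here `c q t = α_{qt}`; indices are 1-based
and the variable `x_j` is `X l` with `l + 1 = j`),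
`⟨x_{i_1}^{α_1},…,x_{i_r}^{α_r}⟩_d = Σ_{q=1}^r ∏_{t=0}^s (x_1^{d_t},…,x_{i_q}^{d_t})^{α_{qt}}`. -/
theorem dfixed_span_powers_of_variables {n : ℕ} (hn : 2 ≤ n) {K : Type*} [Field K]
    (s : ℕ) (d : ℕ → ℕ) (hd0 : d 0 = 1)
    (hdvd : ∀ t < s, d t ∣ d (t + 1)) (hdlt : ∀ t < s, d t < d (t + 1))
    (r : ℕ) (hr : 1 ≤ r) (i α : ℕ → ℕ)
    (hi1 : 1 ≤ i 1) (hin : i r = n) (himono : StrictMonoOn i (Set.Icc 1 r))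
    (hα1 : 1 ≤ α 1) (hαmono : StrictMonoOn α (Set.Icc 1 r))
    (c : ℕ → ℕ → ℕ) (hc : ∀ q ∈ Finset.Icc 1 r, IsDDecomp d s (α q) (c q)) :
    dFixedSpan d s {g : MvPolynomial (Fin n) K |
        ∃ q ∈ Finset.Icc 1 r, ∃ l : Fin n, (l : ℕ) + 1 = i q ∧ g = X l ^ α q} =
      ∑ q ∈ Finset.Icc 1 r, ∏ t ∈ Finset.range (s + 1),
        (Ideal.span {g : MvPolynomial (Fin n) K |
          ∃ l : Fin n, (l : ℕ) < i q ∧ g = X l ^ d t}) ^ c q t := by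
  classical
  have hn0 : 0 < n := by omega
  have hiq : ∀ q ∈ Finset.Icc 1 r, 1 ≤ i q ∧ i q ≤ n := by
    intro q hq
    rw [Finset.mem_Icc] at hq
    have h1 : i 1 ≤ i q := by
      rcases eq_or_lt_of_le hq.1 with h | h
      · rw [← h]
      · exact le_of_lt (himono (Set.mem_Icc.mpr ⟨le_refl 1, by omega⟩)
          (Set.mem_Icc.mpr ⟨hq.1, hq.2⟩) h)
    have h2 : i q ≤ i r := by
      rcases eq_or_lt_of_le hq.2 with h | h
      · rw [h]
      · exact le_of_lt (himono (Set.mem_Icc.mpr ⟨hq.1, hq.2⟩)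
          (Set.mem_Icc.mpr ⟨by omega, le_refl r⟩) h)
    exact ⟨le_trans hi1 h1, by rw [← hin]; exact h2⟩
  have hgen : ∀ q t, {g : MvPolynomial (Fin n) K | ∃ l : Fin n, (l : ℕ) < i q ∧ g = X l ^ d t}
      = (fun a => (monomial a (1 : K))) ''
        {u : Fin n →₀ ℕ | ∃ l : Fin n, (l : ℕ) < i q ∧ u = Finsupp.single l (d t)} := by
    intro q t
    ext g
    simp only [Set.mem_setOf_eq, Set.mem_image]
    constructor
    · rintro ⟨l, hl, rfl⟩
      exact ⟨Finsupp.single l (d t), ⟨l, hl, rfl⟩, (X_pow_eq_monomial).symm⟩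
    · rintro ⟨u, ⟨l, hl, rfl⟩, rfl⟩
      exact ⟨l, hl, X_pow_eq_monomial.symm⟩
  have hPq : ∀ q ∈ Finset.Icc 1 r,
      (∏ t ∈ Finset.range (s + 1),
        (Ideal.span {g : MvPolynomial (Fin n) K |
          ∃ l : Fin n, (l : ℕ) < i q ∧ g = X l ^ d t}) ^ c q t)
      = Ideal.span ((fun a => (monomial a (1 : K))) '' Emat d s (i q) (c q)) := by
    intro q hq
    rw [Finset.prod_congr rfl (fun t _ => by rw [hgen q t])]
    exact prod_eq_span_emat hn0 d s (i q) (c q)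
  set EU : Set (Fin n →₀ ℕ) := ⋃ q ∈ Finset.Icc 1 r, Emat d s (i q) (c q) with hEU
  have hRHS : (∑ q ∈ Finset.Icc 1 r, ∏ t ∈ Finset.range (s + 1),
      (Ideal.span {g : MvPolynomial (Fin n) K |
        ∃ l : Fin n, (l : ℕ) < i q ∧ g = X l ^ d t}) ^ c q t)
      = Ideal.span ((fun a => (monomial a (1 : K))) '' EU) := by
    rw [Finset.sum_congr rfl hPq,
      sum_span_eq (Finset.Icc 1 r)
        (fun q => (fun a => (monomial a (1 : K))) '' Emat d s (i q) (c q))]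
    congr 1
    exact (Set.image_iUnion₂ _ _).symm
  have hsingleE : ∀ q ∈ Finset.Icc 1 r, ∀ l : Fin n, (l : ℕ) < i q →
      Finsupp.single l (α q) ∈ Emat d s (i q) (c q) := by
    intro q hq l hl
    refine ⟨fun l' τ => if l' = l ∧ τ ≤ s then c q τ else 0, ?_, ?_, ?_⟩
    · intro τ hτ
      dsimp only
      have hterm : ∀ l' : Fin n, (if l' = l ∧ τ ≤ s then c q τ else 0)
          = (if l' = l then c q τ else 0) := by
        intro l'
        by_cases h : l' = l
        · simp [h, hτ]
        · simp [h]
      rw [Finset.sum_congr rfl (fun l' _ => hterm l'),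
        Finset.sum_ite_eq' Finset.univ l (fun _ => c q τ),
        if_pos (Finset.mem_univ l)]
    · intro l' τ hne
      dsimp only at hne
      by_cases h : l' = l ∧ τ ≤ s
      · exact ⟨h.1 ▸ hl, h.2⟩
      · rw [if_neg h] at hne
        exact absurd rfl hne
    · intro l'
      dsimp only
      rw [Finsupp.single_apply]
      by_cases h : l = l'
      · rw [if_pos h, (hc q hq).1]
        apply Finset.sum_congr rfl
        intro τ hτ
        simp only [Finset.mem_range] at hτ
        rw [if_pos ⟨h.symm, by omega⟩]
      · rw [if_neg h]
        symm
        apply Finset.sum_eq_zero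
        intro τ _
        rw [if_neg (fun hh => h hh.1.symm), zero_mul]
  rw [hRHS]
  simp only [dFixedSpan]
  apply le_antisymm
  · apply sInf_le
    constructor
    · constructor
      · exact ⟨EU, rfl⟩
      · intro m hm jv iv hji t ht
        rw [mem_span_mono_iff] at hm
        obtain ⟨f, hfEU, hfm⟩ := hm
        rw [hEU] at hfEU
        simp only [Set.mem_iUnion] at hfEU
        obtain ⟨q, hq, hfE⟩ := hfEU
        obtain ⟨u', hu'mem, hu'le⟩ := emat_exchange d s hd0 hdvd hdlt (i q) (c q)
          (hc q hq).2 f hfE m hfm jv iv hji t ht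
        rw [mem_span_mono_iff]
        exact ⟨u', Set.mem_biUnion hq hu'mem, hu'le⟩
    · rintro g ⟨q, hq, l, hl, rfl⟩
      rw [SetLike.mem_coe, X_pow_eq_monomial, mem_span_mono_iff]
      exact ⟨Finsupp.single l (α q),
        Set.mem_biUnion hq (hsingleE q hq l (by omega)), le_refl _⟩
  · apply le_sInf
    rintro J ⟨⟨hJmono, hJfix⟩, hJU⟩
    rw [Ideal.span_le]
    rintro _ ⟨u, huEU, rfl⟩
    rw [hEU] at huEU
    simp only [Set.mem_iUnion] at huEU
    obtain ⟨q, hq, huE⟩ := huEU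
    have hq12 := hiq q hq
    have hJgen : (monomial (Finsupp.single
        (⟨i q - 1, by omega⟩ : Fin n) (α q)) (1 : K)) ∈ J := by
      have hXmem : (X (⟨i q - 1, by omega⟩ : Fin n) ^ α q : MvPolynomial (Fin n) K) ∈ J := by
        apply hJU
        exact ⟨q, hq, ⟨i q - 1, by omega⟩, by simp; omega, rfl⟩
      rwa [X_pow_eq_monomial] at hXmem
    exact SetLike.mem_coe.mpr (emat_mem_of_dfixed d s (i q) hq12.1 hq12.2 (c q)
      (hc q hq).2 (α q) (hc q hq).1 J hJfix hJgen u huE)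
end

section
/- Let n ≥ 2, 1 ≤ i_1 < ⋯ < i_r = n integers, α_1 < ⋯ < α_r positive integers with d-decompositions α_q = Σ_t α_{qt} d_t, and set I_q = ∏_{t=0}^{s} ((x_1^{d_t},…,x_{i_q}^{d_t}))^{α_{qt}}. With m_q = (x_1,…,x_{i_q}) and n_q = (x_{i_{q−1}+1},…,x_{i_q}) (where i_0 = 0), for every 1 ≤ q ≤ r the following chain holds: (I_q : m_q) + (I_1 + ⋯ + I_q) ⊆ ((I_1 + ⋯ + I_q) : m_q) ⊆ ((I_1 + ⋯ + I_q) : n_q) = (I_q : n_q) + (I_1 + ⋯ + I_q). -/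
open MvPolynomial Pointwise

namespace ColonChainAux

variable {n : ℕ} {K : Type*} [Field K]

/-- span of monomials with exponents in `A`. -/
noncomputable def mspan (n : ℕ) (K : Type*) [Field K] (A : Set (Fin n →₀ ℕ)) :
    Ideal (MvPolynomial (Fin n) K) :=
  Ideal.span ((fun m => (monomial m (1 : K) : MvPolynomial (Fin n) K)) '' A)

lemma mem_mspan {A : Set (Fin n →₀ ℕ)} {p : MvPolynomial (Fin n) K} :
    p ∈ mspan n K A ↔ ∀ m ∈ p.support, ∃ a ∈ A, a ≤ m :=
  mem_ideal_span_monomial_image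

lemma monomial_mem_mspan {A : Set (Fin n →₀ ℕ)} {m : Fin n →₀ ℕ} (c : K)
    (h : ∃ a ∈ A, a ≤ m) : (monomial m c : MvPolynomial (Fin n) K) ∈ mspan n K A := by
  classical
  rw [mem_mspan]
  intro m' hm'
  rw [support_monomial] at hm'
  split at hm'
  · simp at hm'
  · simp only [Finset.mem_singleton] at hm'
    exact hm' ▸ h

lemma mspan_mul (A B : Set (Fin n →₀ ℕ)) :
    mspan n K A * mspan n K B = mspan n K (A + B) := by
  unfold mspan
  rw [Ideal.span_mul_span']
  congr 1
  ext x
  simp only [Set.mem_mul, Set.mem_image, Set.mem_add]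
  constructor
  · rintro ⟨-, ⟨a, ha, rfl⟩, -, ⟨b, hb, rfl⟩, rfl⟩
    exact ⟨a + b, ⟨a, ha, b, hb, rfl⟩, by rw [monomial_mul, one_mul]⟩
  · rintro ⟨-, ⟨a, ha, b, hb, rfl⟩, rfl⟩
    exact ⟨monomial a 1, ⟨a, ha, rfl⟩, monomial b 1, ⟨b, hb, rfl⟩,
      by rw [monomial_mul, one_mul]⟩

lemma mspan_zero_singleton : mspan n K {0} = ⊤ := by
  unfold mspan
  rw [Set.image_singleton]
  have : (monomial (0 : Fin n →₀ ℕ) (1 : K) : MvPolynomial (Fin n) K) = 1 := by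
    simp
  rw [this, Ideal.span_singleton_one]

/-- existence of monomial generating sets for powers, keeping a predicate. -/
lemma exists_pow (P : (Fin n →₀ ℕ) → Prop) (h0 : P 0)
    (hadd : ∀ a b, P a → P b → P (a + b)) (A : Set (Fin n →₀ ℕ))
    (hA : ∀ a ∈ A, P a) (k : ℕ) :
    ∃ B : Set (Fin n →₀ ℕ), mspan n K A ^ k = mspan n K B ∧ ∀ b ∈ B, P b := by
  induction k with
  | zero =>
    exact ⟨{0}, by rw [pow_zero, mspan_zero_singleton, Ideal.one_eq_top],
      fun b hb => by rw [Set.mem_singleton_iff] at hb; exact hb ▸ h0⟩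
  | succ k ih =>
    obtain ⟨B, hB, hBP⟩ := ih
    refine ⟨B + A, ?_, ?_⟩
    · rw [pow_succ, hB, mspan_mul]
    · rintro b ⟨x, hx, y, hy, rfl⟩
      exact hadd _ _ (hBP x hx) (hA y hy)

/-- existence of monomial generating sets for finite products of powers. -/
lemma exists_prod (P : (Fin n →₀ ℕ) → Prop) (h0 : P 0)
    (hadd : ∀ a b, P a → P b → P (a + b)) (F : Finset ℕ)
    (S : ℕ → Set (Fin n →₀ ℕ)) (hS : ∀ t ∈ F, ∀ a ∈ S t, P a) (c : ℕ → ℕ) :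
    ∃ B : Set (Fin n →₀ ℕ),
      (∏ t ∈ F, mspan n K (S t) ^ c t) = mspan n K B ∧ ∀ b ∈ B, P b := by
  classical
  induction F using Finset.induction with
  | empty =>
    exact ⟨{0}, by rw [Finset.prod_empty, mspan_zero_singleton, Ideal.one_eq_top],
      fun b hb => by rw [Set.mem_singleton_iff] at hb; exact hb ▸ h0⟩
  | insert t F hnotmem ih =>
    obtain ⟨B, hB, hBP⟩ := ih (fun t' ht' a ha => hS t' (Finset.mem_insert_of_mem ht') a ha)
    obtain ⟨C, hC, hCP⟩ := exists_pow (K := K) P h0 hadd (S t)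
      (hS t (Finset.mem_insert_self t F)) (c t)
    refine ⟨C + B, ?_, ?_⟩
    · rw [Finset.prod_insert hnotmem, hB, hC, mspan_mul]
    · rintro b ⟨x, hx, y, hy, rfl⟩
      exact hadd _ _ (hCP x hx) (hBP y hy)

lemma mem_colon_span {I : Ideal (MvPolynomial (Fin n) K)}
    {G : Set (MvPolynomial (Fin n) K)} {p : MvPolynomial (Fin n) K} :
    p ∈ Submodule.colon I (Ideal.span G) ↔ ∀ g ∈ G, p * g ∈ I := by
  rw [Submodule.mem_colon]
  constructor
  · intro h g hg
    exact h g (Ideal.subset_span hg)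
  · intro h x hx
    induction hx using Submodule.span_induction with
    | mem y hy => exact h y hy
    | zero => simpa using I.zero_mem
    | add y z _ _ hy hz => rw [smul_add]; exact I.add_mem hy hz
    | smul a y _ hy =>
      rw [smul_comm]
      exact Ideal.mul_mem_left _ a hy

end ColonChainAux

namespace ColonChainAux2
open ColonChainAux

variable {n : ℕ} {K : Type*} [Field K]

lemma mspan_empty : mspan n K ∅ = ⊥ := by
  unfold mspan; rw [Set.image_empty, Ideal.span_empty]

lemma mspan_union (A B : Set (Fin n →₀ ℕ)) :
    mspan n K (A ∪ B) = mspan n K A ⊔ mspan n K B := by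
  unfold mspan; rw [Set.image_union, Ideal.span_union]

lemma sum_mspan (A : ℕ → Set (Fin n →₀ ℕ)) (F : Finset ℕ) :
    (∑ e ∈ F, mspan n K (A e)) = mspan n K (⋃ e ∈ F, A e) := by
  classical
  induction F using Finset.induction with
  | empty => simp [mspan_empty]
  | insert e F hnm ih =>
    rw [Finset.sum_insert hnm, Finset.set_biUnion_insert, mspan_union, ih,
      Submodule.add_eq_sup]

lemma colon_mono_left {J1 J2 P : Ideal (MvPolynomial (Fin n) K)} (h : J1 ≤ J2) :
    Submodule.colon J1 P ≤ Submodule.colon J2 P := by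
  intro x hx
  rw [Submodule.mem_colon] at hx ⊢
  exact fun p hp => h (hx p hp)

lemma colon_anti_right {J P1 P2 : Ideal (MvPolynomial (Fin n) K)} (h : P1 ≤ P2) :
    Submodule.colon J P2 ≤ Submodule.colon J P1 := by
  intro x hx
  rw [Submodule.mem_colon] at hx ⊢
  exact fun p hp => hx p (h hp)

lemma le_colon_self (J P : Ideal (MvPolynomial (Fin n) K)) :
    J ≤ Submodule.colon J P := by
  intro x hx
  rw [Submodule.mem_colon]
  intro p _
  rw [smul_eq_mul]
  exact Ideal.mul_mem_right p J hx

end ColonChainAux2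



open MvPolynomial

/-- Proposition 2.6: with `I_q = ∏_{t=0}^s (x_1^{d_t},…,x_{i_q}^{d_t})^{α_{qt}}`
(`c q t = α_{qt}` the `d`-decomposition of `α_q`), `m_q = (x_1,…,x_{i_q})` and
`n_q = (x_{i_{q−1}+1},…,x_{i_q})` (with `i_0 = 0`; indices 1-based, `x_j = X l` with
`l + 1 = j`), for every `1 ≤ q ≤ r` the chain
`(I_q : m_q) + (I_1+⋯+I_q) ⊆ ((I_1+⋯+I_q) : m_q) ⊆ ((I_1+⋯+I_q) : n_q)
  = (I_q : n_q) + (I_1+⋯+I_q)` holds. -/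
theorem colon_chain {n : ℕ} (hn : 2 ≤ n) {K : Type*} [Field K]
    (s : ℕ) (d : ℕ → ℕ) (hd0 : d 0 = 1)
    (hdvd : ∀ t < s, d t ∣ d (t + 1)) (hdlt : ∀ t < s, d t < d (t + 1))
    (r : ℕ) (hr : 1 ≤ r) (i α : ℕ → ℕ)
    (hi0 : i 0 = 0) (hi1 : 1 ≤ i 1) (hin : i r = n)
    (himono : StrictMonoOn i (Set.Icc 1 r))
    (hα1 : 1 ≤ α 1) (hαmono : StrictMonoOn α (Set.Icc 1 r))
    (c : ℕ → ℕ → ℕ) (hc : ∀ q ∈ Finset.Icc 1 r, IsDDecomp d s (α q) (c q))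
    (q : ℕ) (hq : q ∈ Finset.Icc 1 r) :
    letI Iq : ℕ → Ideal (MvPolynomial (Fin n) K) := fun e =>
      ∏ t ∈ Finset.range (s + 1),
        (Ideal.span {g : MvPolynomial (Fin n) K |
          ∃ l : Fin n, (l : ℕ) < i e ∧ g = X l ^ d t}) ^ c e t
    letI mq : Ideal (MvPolynomial (Fin n) K) :=
      Ideal.span {g : MvPolynomial (Fin n) K | ∃ l : Fin n, (l : ℕ) < i q ∧ g = X l}
    letI nq : Ideal (MvPolynomial (Fin n) K) :=
      Ideal.span {g : MvPolynomial (Fin n) K |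
        ∃ l : Fin n, i (q - 1) < (l : ℕ) + 1 ∧ (l : ℕ) + 1 ≤ i q ∧ g = X l}
    letI T : Ideal (MvPolynomial (Fin n) K) := ∑ e ∈ Finset.Icc 1 q, Iq e
    Submodule.colon (Iq q) mq + T ≤ Submodule.colon T mq ∧
      Submodule.colon T mq ≤ Submodule.colon T nq ∧
      Submodule.colon T nq = Submodule.colon (Iq q) nq + T := by
  classical
  obtain ⟨hq1, hqr⟩ := Finset.mem_Icc.mp hq
  set Iq : ℕ → Ideal (MvPolynomial (Fin n) K) := fun e =>
      ∏ t ∈ Finset.range (s + 1),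
        (Ideal.span {g : MvPolynomial (Fin n) K |
          ∃ l : Fin n, (l : ℕ) < i e ∧ g = X l ^ d t}) ^ c e t with hIqdef
  set mq : Ideal (MvPolynomial (Fin n) K) :=
      Ideal.span {g : MvPolynomial (Fin n) K | ∃ l : Fin n, (l : ℕ) < i q ∧ g = X l}
      with hmqdef
  set nq : Ideal (MvPolynomial (Fin n) K) :=
      Ideal.span {g : MvPolynomial (Fin n) K |
        ∃ l : Fin n, i (q - 1) < (l : ℕ) + 1 ∧ (l : ℕ) + 1 ≤ i q ∧ g = X l} with hnqdef
  set T : Ideal (MvPolynomial (Fin n) K) := ∑ e ∈ Finset.Icc 1 q, Iq e with hTdef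
  -- base generating-set description
  have base : ∀ (N D : ℕ),
      Ideal.span {g : MvPolynomial (Fin n) K | ∃ l : Fin n, (l : ℕ) < N ∧ g = X l ^ D} =
        ColonChainAux.mspan n K
          {f : Fin n →₀ ℕ | ∃ l : Fin n, (l : ℕ) < N ∧ f = Finsupp.single l D} := by
    intro N D
    unfold ColonChainAux.mspan
    congr 1
    ext g
    simp only [Set.mem_setOf_eq, Set.mem_image]
    constructor
    · rintro ⟨l, hl, rfl⟩
      exact ⟨Finsupp.single l D, ⟨l, hl, rfl⟩, X_pow_eq_monomial.symm⟩
    · rintro ⟨f, ⟨l, hl, rfl⟩, rfl⟩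
      exact ⟨l, hl, X_pow_eq_monomial.symm⟩
  have key : ∀ e : ℕ, ∃ A : Set (Fin n →₀ ℕ),
      (∏ t ∈ Finset.range (s + 1),
        (Ideal.span {g : MvPolynomial (Fin n) K |
          ∃ l : Fin n, (l : ℕ) < i e ∧ g = X l ^ d t}) ^ c e t) = ColonChainAux.mspan n K A ∧
        ∀ a ∈ A, ∀ l : Fin n, a l ≠ 0 → (l : ℕ) < i e := by
    intro e
    obtain ⟨B, hB, hBP⟩ := ColonChainAux.exists_prod (K := K)
      (P := fun a => ∀ l : Fin n, a l ≠ 0 → (l : ℕ) < i e)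
      (by intro l hl; simp at hl)
      (by
        intro a b ha hb l hl
        rw [Finsupp.add_apply] at hl
        by_cases h : a l = 0
        · exact hb l (by omega)
        · exact ha l h)
      (Finset.range (s + 1))
      (fun t => {f : Fin n →₀ ℕ | ∃ l : Fin n, (l : ℕ) < i e ∧ f = Finsupp.single l (d t)})
      (by
        rintro t ht a ⟨l, hl, rfl⟩ l' hl'
        have : l = l' := by
          by_contra h
          rw [Finsupp.single_apply, if_neg h] at hl'
          exact hl' rfl
        exact this ▸ hl)
      (c e)
    refine ⟨B, ?_, hBP⟩
    rw [← hB]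
    exact Finset.prod_congr rfl fun t _ => by rw [base (i e) (d t)]
  choose A hA0 hP using key
  have hA : ∀ e, Iq e = ColonChainAux.mspan n K (A e) := fun e => by
    rw [hIqdef]; exact hA0 e
  have hqmem : q ∈ Finset.Icc 1 q := Finset.mem_Icc.mpr ⟨hq1, le_refl q⟩
  have hIqT : Iq q ≤ T := by
    have hT : T = Iq q + ∑ e ∈ (Finset.Icc 1 q).erase q, Iq e :=
      (Finset.add_sum_erase _ _ hqmem).symm
    rw [hT, Submodule.add_eq_sup]
    exact le_sup_left
  have hnm : nq ≤ mq := by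
    rw [hnqdef, hmqdef]
    apply Ideal.span_mono
    rintro g ⟨l, hl1, hl2, rfl⟩
    exact ⟨l, by omega, rfl⟩
  have hTm : T = ColonChainAux.mspan n K (⋃ e ∈ Finset.Icc 1 q, A e) := by
    rw [hTdef]
    rw [Finset.sum_congr rfl fun e _ => hA e]
    exact ColonChainAux2.sum_mspan A (Finset.Icc 1 q)
  refine ⟨?_, ?_, ?_⟩
  · rw [Submodule.add_eq_sup]
    exact sup_le (ColonChainAux2.colon_mono_left hIqT) (ColonChainAux2.le_colon_self T mq)
  · exact ColonChainAux2.colon_anti_right hnm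
  · apply le_antisymm
    · -- the main inclusion
      intro p hp
      set U : Set (Fin n →₀ ℕ) := ⋃ e ∈ Finset.Icc 1 q, A e with hU
      set D : (Fin n →₀ ℕ) → Prop := fun m => ∃ a ∈ U, a ≤ m with hD
      set pT : MvPolynomial (Fin n) K :=
        ∑ m ∈ p.support.filter D, monomial m (coeff m p) with hpTdef
      set pC : MvPolynomial (Fin n) K :=
        ∑ m ∈ p.support.filter (fun m => ¬ D m), monomial m (coeff m p) with hpCdef
      have hsplit : pT + pC = p := by
        rw [hpTdef, hpCdef, Finset.sum_filter_add_sum_filter_not]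
        exact support_sum_monomial_coeff p
      have hpT : pT ∈ T := by
        rw [hTm]
        apply Ideal.sum_mem
        intro m hm
        rw [Finset.mem_filter] at hm
        exact ColonChainAux.monomial_mem_mspan _ hm.2
      have hpC : pC ∈ Submodule.colon (Iq q) nq := by
        rw [hA q, hnqdef, ColonChainAux.mem_colon_span]
        rintro g ⟨l, hl1, hl2, rfl⟩
        rw [Finset.sum_mul]
        apply Ideal.sum_mem
        intro m hm
        rw [Finset.mem_filter] at hm
        obtain ⟨hmp, hmD⟩ := hm
        have hXl : (X l : MvPolynomial (Fin n) K) = monomial (Finsupp.single l 1) 1 := by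
          rw [← X_pow_eq_monomial, pow_one]
        rw [hXl, monomial_mul, mul_one]
        apply ColonChainAux.monomial_mem_mspan
        -- use hp : p ∈ colon T nq
        have hpX : p * X l ∈ ColonChainAux.mspan n K U := by
          rw [← hTm]
          rw [hnqdef] at hp
          have := Submodule.mem_colon.mp hp (X l)
            (Ideal.subset_span ⟨l, hl1, hl2, rfl⟩)
          rwa [smul_eq_mul] at this
        rw [ColonChainAux.mem_mspan] at hpX
        have hmem : m + Finsupp.single l 1 ∈ (p * X l).support := by
          rw [support_mul_X]
          exact Finset.mem_map.mpr ⟨m, hmp, rfl⟩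
        obtain ⟨a, haU, hale⟩ := hpX _ hmem
        obtain ⟨e, he, haA⟩ : ∃ e ∈ Finset.Icc 1 q, a ∈ A e := by
          simpa [hU] using haU
        obtain ⟨he1, heq'⟩ := Finset.mem_Icc.mp he
        rcases eq_or_lt_of_le heq' with heq | hlt
        · exact ⟨a, heq ▸ haA, hale⟩
        · exfalso
          apply hmD
          have hq2 : 2 ≤ q := by omega
          have hie : i e ≤ i (q - 1) := by
            rcases eq_or_lt_of_le (show e ≤ q - 1 by omega) with h | h
            · exact h ▸ le_refl _
            · exact le_of_lt (himono ⟨he1, by omega⟩ ⟨by omega, by omega⟩ h)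
          have hal : a l = 0 := by
            by_contra hne
            have := hP e a haA l hne
            omega
          refine ⟨a, haU, ?_⟩
          rw [Finsupp.le_def]
          intro j
          have hj := Finsupp.le_def.mp hale j
          rw [Finsupp.add_apply] at hj
          by_cases hjl : j = l
          · subst hjl; omega
          · rw [Finsupp.single_apply, if_neg (fun h => hjl h.symm)] at hj
            omega
      rw [Submodule.add_eq_sup]
      exact Submodule.mem_sup.mpr ⟨pC, hpC, pT, hpT, by rw [add_comm]; exact hsplit⟩
    · rw [Submodule.add_eq_sup]
      exact sup_le (ColonChainAux2.colon_mono_left hIqT) (ColonChainAux2.le_colon_self T nq)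
end
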